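/- arXiv:1106.5150 — 11 statements merged into one kernel-verified Lean document; each statement's English description precedes it below -/
import Mathlib

section
/- Let N ≥ 2 and let D = (d_0, d_1, …, d_{N−1}) be a non-increasing sequence of nonnegative integers with 1 ≤ d_0 ≤ N−1. Then D is graphical if and only if the sequence D' = (d_1 − 1, d_2 − 1, …, d_{d_0} − 1, d_{d_0 + 1}, …, d_{N−1}) of length N−1, obtained by removing d_0 and subtracting 1 from each of the next d_0 entries, is graphical (as a multiset of N−1 nonnegative integers, i.e., after rearrangement into non-increasing order; in particular D is not graphical if any entry of D' is negative). -/
open Finset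

lemma card_insert_erase {V : Type*} [DecidableEq V] {s : Finset V} {y z : V}
    (hy : y ∈ s) (hz : z ∉ s) : (insert z (s.erase y)).card = s.card := by
  rw [Finset.card_insert_of_notMem (fun h => hz (Finset.mem_of_mem_erase h)),
    Finset.card_erase_of_mem hy]
  have : 1 ≤ s.card := Finset.card_pos.2 ⟨y, hy⟩
  omega

set_option maxHeartbeats 1600000

section TwoSwitch
variable {V : Type*} [Fintype V] [DecidableEq V]

lemma twoSwitch (G : SimpleGraph V) [DecidableRel G.Adj]
    (a b c e : V) (hab : G.Adj a b) (hce : G.Adj c e)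
    (hac : ¬ G.Adj a c) (hbe : ¬ G.Adj b e)
    (hac' : a ≠ c) (hae : a ≠ e) (hbc : b ≠ c) (hbe' : b ≠ e) :
    ∃ (G' : SimpleGraph V) (_ : DecidableRel G'.Adj),
      (∀ v, G'.degree v = G.degree v) ∧ G'.Adj a c ∧ ¬ G'.Adj a b ∧
      (∀ x, x ≠ b → x ≠ c → (G'.Adj a x ↔ G.Adj a x)) := by
  have hab' : a ≠ b := hab.ne
  have hce' : c ≠ e := hce.ne
  let G' : SimpleGraph V :=
    { Adj := fun x y =>
        ¬ ((x = a ∧ y = b) ∨ (x = b ∧ y = a) ∨ (x = c ∧ y = e) ∨ (x = e ∧ y = c)) ∧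
        (((x = a ∧ y = c) ∨ (x = c ∧ y = a) ∨ (x = b ∧ y = e) ∨ (x = e ∧ y = b)) ∨ G.Adj x y)
      symm := by
        refine ⟨fun x y h => ?_⟩
        have hs : G.Adj x y → G.Adj y x := fun h => G.adj_symm h
        tauto
      loopless := by
        refine ⟨fun x h => ?_⟩
        have := G.loopless.irrefl x
        rcases h with ⟨h1, h2 | h2⟩
        · rcases h2 with ⟨rfl, rfl⟩ | ⟨rfl, rfl⟩ | ⟨rfl, rfl⟩ | ⟨rfl, rfl⟩ <;> tauto
        · exact this h2 }
  have dec : DecidableRel G'.Adj := fun x y => by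
    show Decidable (¬ _ ∧ _); infer_instance
  have adj' : ∀ x y, G'.Adj x y ↔
      (¬ ((x = a ∧ y = b) ∨ (x = b ∧ y = a) ∨ (x = c ∧ y = e) ∨ (x = e ∧ y = c)) ∧
      (((x = a ∧ y = c) ∨ (x = c ∧ y = a) ∨ (x = b ∧ y = e) ∨ (x = e ∧ y = b)) ∨ G.Adj x y)) :=
    fun _ _ => Iff.rfl
  have na : ∀ x, G'.Adj a x ↔ (x = c ∨ (x ≠ b ∧ G.Adj a x)) := by
    intro x; rw [adj']; constructor
    · rintro ⟨h1, h2⟩; aesop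
    · rintro (rfl | ⟨hxb, hx⟩) <;> aesop
  have nb : ∀ x, G'.Adj b x ↔ (x = e ∨ (x ≠ a ∧ G.Adj b x)) := by
    intro x; rw [adj']; constructor
    · rintro ⟨h1, h2⟩; aesop
    · rintro (rfl | ⟨hxa, hx⟩) <;> aesop
  have nc : ∀ x, G'.Adj c x ↔ (x = a ∨ (x ≠ e ∧ G.Adj c x)) := by
    intro x; rw [adj']; constructor
    · rintro ⟨h1, h2⟩; aesop
    · rintro (rfl | ⟨hxe, hx⟩)
      · exact ⟨by aesop, Or.inl (Or.inr (Or.inl ⟨rfl, rfl⟩))⟩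
      · exact ⟨by aesop, Or.inr hx⟩
  have ne' : ∀ x, G'.Adj e x ↔ (x = b ∨ (x ≠ c ∧ G.Adj e x)) := by
    intro x; rw [adj']; constructor
    · rintro ⟨h1, h2⟩
      rcases h2 with (⟨h, -⟩ | ⟨h, -⟩ | ⟨h, -⟩ | ⟨-, rfl⟩) | h2
      · exact absurd h.symm hae
      · exact absurd h.symm hce'
      · exact absurd h.symm hbe'
      · exact Or.inl rfl
      · exact Or.inr ⟨fun hxc => h1 (Or.inr (Or.inr (Or.inr ⟨rfl, hxc⟩))), h2⟩
    · rintro (rfl | ⟨hxc, hx⟩)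
      · exact ⟨by aesop, Or.inl (Or.inr (Or.inr (Or.inr ⟨rfl, rfl⟩)))⟩
      · exact ⟨by aesop, Or.inr hx⟩
  have nother : ∀ v, v ≠ a → v ≠ b → v ≠ c → v ≠ e → ∀ x, (G'.Adj v x ↔ G.Adj v x) := by
    intro v hva hvb hvc hve x; rw [adj']; constructor
    · rintro ⟨-, h2⟩; aesop
    · intro h; exact ⟨by aesop, Or.inr h⟩
  refine ⟨G', dec, ?_, (na c).2 (Or.inl rfl), ?_, ?_⟩
  · -- degrees preserved
    intro v
    rw [SimpleGraph.degree, SimpleGraph.degree]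
    by_cases hva : v = a
    · subst hva
      have hN : G'.neighborFinset v = insert c ((G.neighborFinset v).erase b) := by
        ext x
        rw [SimpleGraph.mem_neighborFinset, na x]
        simp [SimpleGraph.mem_neighborFinset]
      rw [hN, card_insert_erase (by rwa [SimpleGraph.mem_neighborFinset])
        (by rwa [SimpleGraph.mem_neighborFinset])]
    by_cases hvb : v = b
    · subst hvb
      have hN : G'.neighborFinset v = insert e ((G.neighborFinset v).erase a) := by
        ext x
        rw [SimpleGraph.mem_neighborFinset, nb x]
        simp [SimpleGraph.mem_neighborFinset]
      rw [hN, card_insert_erase (by rw [SimpleGraph.mem_neighborFinset]; exact hab.symm)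
        (by rwa [SimpleGraph.mem_neighborFinset])]
    by_cases hvc : v = c
    · subst hvc
      have hN : G'.neighborFinset v = insert a ((G.neighborFinset v).erase e) := by
        ext x
        rw [SimpleGraph.mem_neighborFinset, nc x]
        simp [SimpleGraph.mem_neighborFinset]
      rw [hN, card_insert_erase (by rw [SimpleGraph.mem_neighborFinset]; exact hce)
        (by rw [SimpleGraph.mem_neighborFinset]; exact fun h => hac h.symm)]
    by_cases hve : v = e
    · subst hve
      have hN : G'.neighborFinset v = insert b ((G.neighborFinset v).erase c) := by
        ext x
        rw [SimpleGraph.mem_neighborFinset, ne' x]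
        simp [SimpleGraph.mem_neighborFinset]
      rw [hN, card_insert_erase (by rw [SimpleGraph.mem_neighborFinset]; exact hce.symm)
        (by rw [SimpleGraph.mem_neighborFinset]; exact fun h => hbe h.symm)]
    · have hN : G'.neighborFinset v = G.neighborFinset v := by
        ext x
        simp only [SimpleGraph.mem_neighborFinset]
        exact nother v hva hvb hvc hve x
      rw [hN]
  · intro h
    rcases (na b).1 h with h | h
    · exact hbc h
    · exact h.1 rfl
  · intro x hxb hxc
    rw [na x]
    constructor
    · rintro (rfl | ⟨-, h⟩)
      · exact absurd rfl hxc
      · exact h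
    · intro h; exact Or.inr ⟨hxb, h⟩
end TwoSwitch

section Improve
variable {V : Type*} [Fintype V] [DecidableEq V]

lemma improve (d : V → ℕ) (v0 : V) (T : Finset V)
    (hv0T : v0 ∉ T) (hTcard : T.card = d v0)
    (hT : ∀ i j : V, i ∈ T → j ∉ T → j ≠ v0 → d j ≤ d i) :
    ∀ (m : ℕ) (G : SimpleGraph V) (inst : DecidableRel G.Adj),
      (∀ i, G.degree i = d i) → ((G.neighborFinset v0) \ T).card ≤ m →
      ∃ (G' : SimpleGraph V) (_ : DecidableRel G'.Adj),
        (∀ i, G'.degree i = d i) ∧ G'.neighborFinset v0 = T := by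
  have finish : ∀ (G : SimpleGraph V) (inst : DecidableRel G.Adj),
      (∀ i, G.degree i = d i) → ((G.neighborFinset v0) \ T) = ∅ →
      G.neighborFinset v0 = T := by
    intro G inst hdeg hempty
    have hsub : G.neighborFinset v0 ⊆ T := Finset.sdiff_eq_empty_iff_subset.1 hempty
    refine Finset.eq_of_subset_of_card_le hsub ?_
    rw [SimpleGraph.card_neighborFinset_eq_degree, hdeg, hTcard]
  intro m
  induction m with
  | zero =>
    intro G inst hdeg hcard
    exact ⟨G, inst, hdeg, finish G inst hdeg (Finset.card_eq_zero.1 (Nat.le_zero.1 hcard))⟩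
  | succ m ih =>
    intro G inst hdeg hcard
    by_cases h0 : (G.neighborFinset v0 \ T) = ∅
    · exact ⟨G, inst, hdeg, finish G inst hdeg h0⟩
    obtain ⟨j, hj⟩ := Finset.nonempty_of_ne_empty h0
    have hjN : j ∈ G.neighborFinset v0 := (Finset.mem_sdiff.1 hj).1
    have hjT : j ∉ T := (Finset.mem_sdiff.1 hj).2
    have hadjvj : G.Adj v0 j := (SimpleGraph.mem_neighborFinset _ _ _).1 hjN
    have hjv0 : j ≠ v0 := hadjvj.ne'
    -- find i ∈ T \ N(v0)
    have hiex : (T \ G.neighborFinset v0).Nonempty := by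
      rw [← Finset.card_pos]
      have e1 := Finset.card_sdiff_add_card_inter T (G.neighborFinset v0)
      have e2 := Finset.card_sdiff_add_card_inter (G.neighborFinset v0) T
      have e3 : (T ∩ G.neighborFinset v0).card = (G.neighborFinset v0 ∩ T).card := by
        rw [Finset.inter_comm]
      have e4 : (G.neighborFinset v0).card = T.card := by
        rw [SimpleGraph.card_neighborFinset_eq_degree, hdeg, hTcard]
      have e5 : 0 < (G.neighborFinset v0 \ T).card := Finset.card_pos.2 ⟨j, hj⟩
      omega
    obtain ⟨i, hi⟩ := hiex
    have hiT : i ∈ T := (Finset.mem_sdiff.1 hi).1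
    have hiN : i ∉ G.neighborFinset v0 := (Finset.mem_sdiff.1 hi).2
    have hnadjvi : ¬ G.Adj v0 i := fun h => hiN ((SimpleGraph.mem_neighborFinset _ _ _).2 h)
    have hiv0 : i ≠ v0 := fun h => hv0T (h ▸ hiT)
    have hij : j ≠ i := fun h => hjT (h ▸ hiT)
    have hdij : d j ≤ d i := hT i j hiT hjT hjv0
    have hdegij : G.degree j ≤ G.degree i := by rw [hdeg, hdeg]; exact hdij
    -- find k ∈ N(i) \ insert j N(j)
    have hkex : (G.neighborFinset i \ insert j (G.neighborFinset j)).Nonempty := by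
      rw [Finset.sdiff_nonempty]
      intro hsub
      have h1 : (G.neighborFinset i).erase j ⊆
          ((G.neighborFinset j).erase v0).erase i := by
        intro x hx
        have hxj : x ≠ j := (Finset.mem_erase.1 hx).1
        have hxNi : x ∈ G.neighborFinset i := (Finset.mem_erase.1 hx).2
        have hadjix : G.Adj i x := (SimpleGraph.mem_neighborFinset _ _ _).1 hxNi
        have hxNj : x ∈ G.neighborFinset j := by
          have := hsub hxNi
          rcases Finset.mem_insert.1 this with h | h
          · exact absurd h hxj
          · exact h
        refine Finset.mem_erase.2 ⟨?_, Finset.mem_erase.2 ⟨?_, hxNj⟩⟩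
        · intro h; subst h; exact G.loopless.irrefl x hadjix
        · intro h; subst h; exact hnadjvi (G.adj_symm hadjix)
      have hcard1 := Finset.card_le_card h1
      have di : (G.neighborFinset i).card = G.degree i :=
        SimpleGraph.card_neighborFinset_eq_degree G i
      have dj : (G.neighborFinset j).card = G.degree j :=
        SimpleGraph.card_neighborFinset_eq_degree G j
      have hv0Nj : v0 ∈ G.neighborFinset j :=
        (SimpleGraph.mem_neighborFinset _ _ _).2 (G.adj_symm hadjvj)
      have e2 : ((G.neighborFinset j).erase v0).card = (G.neighborFinset j).card - 1 :=
        Finset.card_erase_of_mem hv0Nj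
      by_cases hadjij : G.Adj i j
      · have hjNi : j ∈ G.neighborFinset i := (SimpleGraph.mem_neighborFinset _ _ _).2 hadjij
        have hiNj : i ∈ G.neighborFinset j :=
          (SimpleGraph.mem_neighborFinset _ _ _).2 (G.adj_symm hadjij)
        have e1 : ((G.neighborFinset i).erase j).card = (G.neighborFinset i).card - 1 :=
          Finset.card_erase_of_mem hjNi
        have e3 : (((G.neighborFinset j).erase v0).erase i).card =
            ((G.neighborFinset j).erase v0).card - 1 :=
          Finset.card_erase_of_mem (Finset.mem_erase.2 ⟨hiv0, hiNj⟩)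
        have e4 : 1 ≤ ((G.neighborFinset j).erase v0).card :=
          Finset.card_pos.2 ⟨i, Finset.mem_erase.2 ⟨hiv0, hiNj⟩⟩
        have e5 : 1 ≤ (G.neighborFinset i).card := Finset.card_pos.2 ⟨j, hjNi⟩
        omega
      · have hjNi : j ∉ G.neighborFinset i :=
          fun h => hadjij ((SimpleGraph.mem_neighborFinset _ _ _).1 h)
        have hiNj : i ∉ G.neighborFinset j :=
          fun h => hadjij (G.adj_symm ((SimpleGraph.mem_neighborFinset _ _ _).1 h))
        have e1 : (G.neighborFinset i).erase j = G.neighborFinset i :=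
          Finset.erase_eq_of_notMem hjNi
        have e3 : ((G.neighborFinset j).erase v0).erase i = (G.neighborFinset j).erase v0 :=
          Finset.erase_eq_of_notMem (fun h => hiNj (Finset.mem_of_mem_erase h))
        have e4 : 1 ≤ (G.neighborFinset j).card := Finset.card_pos.2 ⟨v0, hv0Nj⟩
        rw [e1, e3] at hcard1
        omega
    obtain ⟨k, hk⟩ := hkex
    have hkNi : k ∈ G.neighborFinset i := (Finset.mem_sdiff.1 hk).1
    have hadjik : G.Adj i k := (SimpleGraph.mem_neighborFinset _ _ _).1 hkNi
    have hkj : k ≠ j := fun h =>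
      (Finset.mem_sdiff.1 hk).2 (Finset.mem_insert.2 (Or.inl h))
    have hnadjjk : ¬ G.Adj j k := fun h =>
      (Finset.mem_sdiff.1 hk).2 (Finset.mem_insert.2
        (Or.inr ((SimpleGraph.mem_neighborFinset _ _ _).2 h)))
    have hv0k : v0 ≠ k := by
      intro h; subst h; exact hnadjvi (G.adj_symm hadjik)
    obtain ⟨G', dec', hdeg', hadj'vi, hnadj'vj, hsame⟩ :=
      twoSwitch G v0 j i k hadjvj hadjik hnadjvi hnadjjk hiv0.symm hv0k hij hkj.symm
    have hdeg'' : ∀ v, G'.degree v = d v := fun v => (hdeg' v).trans (hdeg v)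
    have hm : G'.neighborFinset v0 \ T = (G.neighborFinset v0 \ T).erase j := by
      ext x
      simp only [Finset.mem_sdiff, Finset.mem_erase, SimpleGraph.mem_neighborFinset]
      by_cases hxj : x = j
      · subst hxj
        constructor
        · rintro ⟨h, -⟩; exact absurd h hnadj'vj
        · rintro ⟨h, -⟩; exact absurd rfl h
      by_cases hxi : x = i
      · subst hxi
        constructor
        · rintro ⟨-, h⟩; exact absurd hiT h
        · rintro ⟨-, -, h⟩; exact absurd hiT h
      · rw [hsame x hxj hxi]
        tauto
    have hcard' : (G'.neighborFinset v0 \ T).card ≤ m := by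
      rw [hm, Finset.card_erase_of_mem hj]
      have : 1 ≤ (G.neighborFinset v0 \ T).card := Finset.card_pos.2 ⟨j, hj⟩
      omega
    exact ih G' dec' hdeg'' hcard'
end Improve

lemma exists_bij_of_map_eq {α β : Type*} [DecidableEq α] [DecidableEq β] [Nonempty β]
    {f : α → ℤ} {g : β → ℤ} :
    ∀ (s : Finset α) (t : Finset β), s.val.map f = t.val.map g →
      ∃ σ : α → β, (∀ a ∈ s, σ a ∈ t) ∧
        (∀ a ∈ s, ∀ a' ∈ s, σ a = σ a' → a = a') ∧
        (∀ b ∈ t, ∃ a ∈ s, σ a = b) ∧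
        (∀ a ∈ s, g (σ a) = f a) := by
  intro s
  induction s using Finset.induction_on with
  | empty =>
    intro t ht
    have : t = ∅ := by
      rw [← Finset.card_eq_zero]
      have := congrArg Multiset.card ht
      simpa using this.symm
    subst this
    exact ⟨fun _ => Classical.arbitrary β, by simp, by simp, by simp, by simp⟩
  | insert _ _ ha =>
    rename_i a s' ih
    intro t ht
    rw [Finset.insert_val, Multiset.ndinsert_of_notMem (by simpa using ha),
      Multiset.map_cons] at ht
    have hfa : f a ∈ t.val.map g := by rw [← ht]; exact Multiset.mem_cons_self _ _
    obtain ⟨b, hbt, hgb⟩ := Multiset.mem_map.1 hfa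
    have hbt' : b ∈ t := hbt
    have ht' : s'.val.map f = (t.erase b).val.map g := by
      have h1 : t.val = b ::ₘ (t.erase b).val := by
        rw [Finset.erase_val]; exact (Multiset.cons_erase hbt).symm
      rw [h1, Multiset.map_cons, hgb] at ht
      exact (Multiset.cons_inj_right _).1 ht
    obtain ⟨σ', h1, h2, h3, h4⟩ := ih (t.erase b) ht'
    set σ := Function.update σ' a b with hσ
    have hσa : σ a = b := Function.update_self a b σ'
    have hσne : ∀ x ∈ s', σ x = σ' x := fun x hx =>
      Function.update_of_ne (by rintro rfl; exact ha hx) _ _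
    have hmem : ∀ x, x ∈ insert a s' → x ≠ a → x ∈ s' := by
      intro x hx hxa
      rcases Finset.mem_insert.1 hx with h | h
      · exact absurd h hxa
      · exact h
    refine ⟨σ, ?_, ?_, ?_, ?_⟩
    · intro x hx
      by_cases hxa : x = a
      · subst hxa; rw [hσa]; exact hbt'
      · have hx' := hmem x hx hxa
        rw [hσne x hx']
        exact Finset.mem_of_mem_erase (h1 x hx')
    · intro x hx y hy hxy
      by_cases hxa : x = a <;> by_cases hya : y = a
      · rw [hxa, hya]
      · subst hxa
        have hy' := hmem y hy hya
        rw [hσa, hσne y hy'] at hxy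
        have := h1 y hy'
        rw [← hxy] at this
        exact absurd this (Finset.notMem_erase _ _)
      · subst hya
        have hx' := hmem x hx hxa
        rw [hσa, hσne x hx'] at hxy
        have := h1 x hx'
        rw [hxy] at this
        exact absurd this (Finset.notMem_erase _ _)
      · have hx' := hmem x hx hxa
        have hy' := hmem y hy hya
        rw [hσne x hx', hσne y hy'] at hxy
        exact h2 x hx' y hy' hxy
    · intro c hc
      by_cases hcb : c = b
      · exact ⟨a, Finset.mem_insert_self _ _, by rw [hσa, hcb]⟩
      · obtain ⟨x, hx, hσx⟩ := h3 c (Finset.mem_erase.2 ⟨hcb, hc⟩)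
        exact ⟨x, Finset.mem_insert_of_mem hx, by rw [hσne x hx]; exact hσx⟩
    · intro x hx
      by_cases hxa : x = a
      · subst hxa; rw [hσa]; exact hgb
      · have hx' := hmem x hx hxa
        rw [hσne x hx']
        exact h4 x hx'


/-- **Havel–Hakimi theorem.**
Let `N ≥ 2` and `d` a non-increasing sequence of nonnegative integers with `1 ≤ d 0 ≤ N - 1`.
Then `d` is graphical iff the sequence `D'` of length `N - 1`, obtained by removing `d 0`
and subtracting `1` from each of the next `d 0` entries, is graphical as a multiset of
integers (in particular, `d` is not graphical if any entry of `D'` is negative, since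
degrees of a simple graph are nonnegative). -/
theorem havel_hakimi
    (N : ℕ) (hN : 2 ≤ N) (d : Fin N → ℕ)
    (hmono : Antitone d)
    (hd0pos : 1 ≤ d ⟨0, by omega⟩)
    (hd0bound : d ⟨0, by omega⟩ ≤ N - 1) :
    (∃ (G : SimpleGraph (Fin N)) (_ : DecidableRel G.Adj), ∀ i, G.degree i = d i)
      ↔ (∃ (n : ℕ) (G : SimpleGraph (Fin n)) (_ : DecidableRel G.Adj),
          Multiset.map
            (fun i : Fin N =>
              if i.val ≤ d ⟨0, by omega⟩ then (d i : ℤ) - 1 else (d i : ℤ))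
            ((Finset.univ.filter (fun i : Fin N => i.val ≠ 0)).val)
          = Multiset.map (fun v : Fin n => (G.degree v : ℤ)) Finset.univ.val) := by
  obtain ⟨n₀, rfl⟩ : ∃ n₀, N = n₀ + 1 := ⟨N - 1, by omega⟩
  have hn₀ : 1 ≤ n₀ := by omega
  set v0 : Fin (n₀ + 1) := ⟨0, by omega⟩ with hv0
  set d0 : ℕ := d v0 with hd0
  have hd0n : d0 ≤ n₀ := by omega
  set T : Finset (Fin (n₀ + 1)) :=
    Finset.univ.filter (fun i => i.val ≠ 0 ∧ i.val ≤ d0) with hT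
  have hv0T : v0 ∉ T := by simp [hT, hv0]
  have hTcard : T.card = d0 := by
    have hIcc : (Finset.Icc 1 d0).card = d0 := by rw [Nat.card_Icc]; omega
    rw [← hIcc]
    apply Finset.card_bij (fun (i : Fin (n₀ + 1)) _ => i.val)
    · intro a ha
      simp only [hT, Finset.mem_filter] at ha
      exact Finset.mem_Icc.2 ⟨by omega, ha.2.2⟩
    · intro a _ b _ h
      exact Fin.ext h
    · intro m hm
      rw [Finset.mem_Icc] at hm
      refine ⟨⟨m, by omega⟩, ?_, rfl⟩
      simp only [hT, Finset.mem_filter]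
      refine ⟨Finset.mem_univ _, by simp; omega⟩
  have hmemT : ∀ x : Fin (n₀ + 1), x ∈ T ↔ (x.val ≠ 0 ∧ x.val ≤ d0) := by
    intro x; simp [hT]
  have hne_v0 : ∀ x : Fin (n₀ + 1), x ≠ v0 ↔ x.val ≠ 0 := by
    intro x
    rw [hv0, Fin.ne_iff_vne]
  constructor
  · rintro ⟨G, inst, hdeg⟩
    -- Improve G so that the neighborhood of v0 is exactly T
    have hTmono : ∀ i j : Fin (n₀ + 1), i ∈ T → j ∉ T → j ≠ v0 → d j ≤ d i := by
      intro i j hi hj hjv0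
      have hi' := (hmemT i).1 hi
      have hj' : ¬ (j.val ≠ 0 ∧ j.val ≤ d0) := fun h => hj ((hmemT j).2 h)
      have hjval : j.val ≠ 0 := (hne_v0 j).1 hjv0
      have : d0 < j.val := by
        by_contra h
        exact hj' ⟨hjval, by omega⟩
      exact hmono (by rw [Fin.le_def]; omega)
    obtain ⟨G₂, inst₂, hdeg₂, hNT⟩ :=
      improve d v0 T hv0T hTcard hTmono
        ((G.neighborFinset v0 \ T).card) G inst hdeg le_rfl
    let G' : SimpleGraph (Fin n₀) :=
      { Adj := fun x y => G₂.Adj x.succ y.succ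
        symm := ⟨fun x y h => G₂.adj_symm h⟩
        loopless := ⟨fun x h => G₂.loopless.irrefl _ h⟩ }
    have dec' : DecidableRel G'.Adj := fun x y => inst₂ _ _
    have key : ∀ x : Fin n₀,
        (G'.neighborFinset x).map ⟨Fin.succ, Fin.succ_injective n₀⟩
          = (G₂.neighborFinset x.succ).erase v0 := by
      intro x
      ext y
      simp only [Finset.mem_map, SimpleGraph.mem_neighborFinset, Finset.mem_erase,
        Function.Embedding.coeFn_mk]
      constructor
      · rintro ⟨z, hz, rfl⟩
        refine ⟨by rw [hne_v0, Fin.val_succ]; omega, hz⟩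
      · rintro ⟨hyne, hy⟩
        have hy0 : y.val ≠ 0 := (hne_v0 y).1 hyne
        have hyl := y.isLt
        have hzy : (⟨y.val - 1, by omega⟩ : Fin n₀).succ = y := by
          apply Fin.ext
          rw [Fin.val_succ]
          show y.val - 1 + 1 = y.val
          omega
        refine ⟨⟨y.val - 1, by omega⟩, ?_, hzy⟩
        show G₂.Adj _ _
        rw [hzy]
        exact hy
    have hdegG' : ∀ w : Fin n₀, (G'.degree w : ℤ) =
        (if (w.succ).val ≤ d0 then (d w.succ : ℤ) - 1 else (d w.succ : ℤ)) := by
      intro w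
      have hcard : G'.degree w = ((G₂.neighborFinset w.succ).erase v0).card := by
        rw [← SimpleGraph.card_neighborFinset_eq_degree, ← Finset.card_map, key w]
      have hv0mem : v0 ∈ G₂.neighborFinset w.succ ↔ w.succ ∈ T := by
        rw [SimpleGraph.mem_neighborFinset, ← hNT, SimpleGraph.mem_neighborFinset,
          SimpleGraph.adj_comm]
      by_cases h : (w.succ).val ≤ d0
      · have hmem : v0 ∈ G₂.neighborFinset w.succ :=
          hv0mem.2 ((hmemT _).2 ⟨by rw [Fin.val_succ]; omega, h⟩)
        have h1 : ((G₂.neighborFinset w.succ).erase v0).card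
            = (G₂.neighborFinset w.succ).card - 1 := Finset.card_erase_of_mem hmem
        have h2 : (G₂.neighborFinset w.succ).card = d w.succ := by
          rw [SimpleGraph.card_neighborFinset_eq_degree, hdeg₂]
        have h3 : 1 ≤ d w.succ := by
          rw [← h2]; exact Finset.card_pos.2 ⟨v0, hmem⟩
        rw [if_pos h, hcard, h1, h2]
        push_cast [h3]
        omega
      · have hmem : v0 ∉ G₂.neighborFinset w.succ :=
          fun hh => h (((hmemT _).1 (hv0mem.1 hh)).2)
        have h1 : (G₂.neighborFinset w.succ).erase v0 = G₂.neighborFinset w.succ :=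
          Finset.erase_eq_of_notMem hmem
        rw [if_neg h, hcard, h1, SimpleGraph.card_neighborFinset_eq_degree, hdeg₂]
    refine ⟨n₀, G', dec', ?_⟩
    have hfilter : (Finset.univ.filter (fun i : Fin (n₀+1) => i.val ≠ 0))
        = Finset.univ.map ⟨Fin.succ, Fin.succ_injective n₀⟩ := by
      ext y
      simp only [Finset.mem_filter, Finset.mem_univ, true_and, Finset.mem_map,
        Function.Embedding.coeFn_mk]
      constructor
      · intro hy0
        have hyl := y.isLt
        have hzy : (⟨y.val - 1, by omega⟩ : Fin n₀).succ = y := by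
          apply Fin.ext
          rw [Fin.val_succ]
          show y.val - 1 + 1 = y.val
          omega
        exact ⟨⟨y.val - 1, by omega⟩, hzy⟩
      · rintro ⟨z, -, rfl⟩
        rw [Fin.val_succ]; omega
    rw [hfilter, Finset.map_val, Multiset.map_map]
    apply Multiset.map_congr rfl
    intro w _
    simp only [Function.comp_apply]
    exact (hdegG' w).symm
  · rintro ⟨n, H, instH, hmul⟩
    have hnpos : 0 < n := by
      have hc := congrArg Multiset.card hmul
      simp only [Multiset.card_map] at hc
      have h1 : 0 < (Finset.univ.filter (fun i : Fin (n₀+1) => i.val ≠ 0)).card :=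
        Finset.card_pos.2 ⟨⟨1, by omega⟩, by simp⟩
      have h2 : (Finset.univ.filter (fun i : Fin (n₀+1) => i.val ≠ 0)).card = n := by
        rw [Finset.card_def, hc, ← Finset.card_def, Finset.card_univ, Fintype.card_fin]
      omega
    haveI : Nonempty (Fin n) := ⟨⟨0, hnpos⟩⟩
    obtain ⟨σ, hmaps, hinj, hsurj, hval⟩ := exists_bij_of_map_eq _ _ hmul
    let G : SimpleGraph (Fin (n₀+1)) :=
      { Adj := fun x y => x ≠ y ∧
          ((x ≠ v0 ∧ y ≠ v0 ∧ H.Adj (σ x) (σ y)) ∨ (x = v0 ∧ y ≠ v0 ∧ y.val ≤ d0)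
            ∨ (y = v0 ∧ x ≠ v0 ∧ x.val ≤ d0))
        symm := by
          refine ⟨fun x y h => ?_⟩
          obtain ⟨h1, h2⟩ := h
          have hs : H.Adj (σ x) (σ y) → H.Adj (σ y) (σ x) := fun h => H.adj_symm h
          exact ⟨Ne.symm h1, by tauto⟩
        loopless := ⟨fun x h => h.1 rfl⟩ }
    have decG : DecidableRel G.Adj := fun x y => by
      show Decidable (_ ∧ _); infer_instance
    refine ⟨G, decG, ?_⟩
    intro i
    by_cases hiv : i = v0
    · subst hiv
      have hN0 : G.neighborFinset v0 = T := by
        ext y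
        rw [SimpleGraph.mem_neighborFinset, hmemT]
        show (v0 ≠ y ∧ _) ↔ _
        constructor
        · rintro ⟨hne, h⟩
          rcases h with ⟨h, -, -⟩ | ⟨-, hy, hle⟩ | ⟨-, h, -⟩
          · exact absurd rfl h
          · exact ⟨(hne_v0 y).1 hy, hle⟩
          · exact absurd rfl h
        · rintro ⟨hy0, hyle⟩
          have hyv : y ≠ v0 := (hne_v0 y).2 hy0
          exact ⟨Ne.symm hyv, Or.inr (Or.inl ⟨rfl, hyv, hyle⟩)⟩
      rw [← SimpleGraph.card_neighborFinset_eq_degree, hN0, hTcard]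
    · have hi0 : i.val ≠ 0 := (hne_v0 i).1 hiv
      have hiS : i ∈ Finset.univ.filter (fun j : Fin (n₀+1) => j.val ≠ 0) := by
        simpa using hi0
      set F : Finset (Fin (n₀+1)) :=
        Finset.univ.filter (fun y => y ≠ v0 ∧ H.Adj (σ i) (σ y)) with hF
    -- F.card = H.degree (σ i)
      have hFcard : F.card = H.degree (σ i) := by
        rw [← SimpleGraph.card_neighborFinset_eq_degree]
        apply Finset.card_bij (fun y _ => σ y)
        · intro y hy
          simp only [hF, Finset.mem_filter] at hy
          exact (SimpleGraph.mem_neighborFinset _ _ _).2 hy.2.2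
        · intro y hy z hz h
          simp only [hF, Finset.mem_filter] at hy hz
          refine hinj y ?_ z ?_ h
          · simpa using (hne_v0 y).1 hy.2.1
          · simpa using (hne_v0 z).1 hz.2.1
        · intro z hz
          obtain ⟨a, haS, hσa⟩ := hsurj z (Finset.mem_univ z)
          refine ⟨a, ?_, hσa⟩
          simp only [hF, Finset.mem_filter]
          have ha0 : a.val ≠ 0 := by simpa using haS
          refine ⟨Finset.mem_univ _, (hne_v0 a).2 ha0, ?_⟩
          rw [hσa]
          exact (SimpleGraph.mem_neighborFinset _ _ _).1 hz
      have hvalI : (H.degree (σ i) : ℤ)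
          = if i.val ≤ d0 then (d i : ℤ) - 1 else (d i : ℤ) := hval i hiS
      by_cases hile : i.val ≤ d0
      · have hNi : G.neighborFinset i = insert v0 F := by
          ext y
          rw [SimpleGraph.mem_neighborFinset, Finset.mem_insert]
          show (i ≠ y ∧ _) ↔ _
          constructor
          · rintro ⟨hne, h⟩
            rcases h with ⟨-, hy, hadj⟩ | ⟨h, -, -⟩ | ⟨h, -, -⟩
            · right
              simp only [hF, Finset.mem_filter]
              exact ⟨Finset.mem_univ _, hy, hadj⟩
            · exact absurd h hiv
            · exact Or.inl h
          · rintro (rfl | hy)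
            · exact ⟨hiv, Or.inr (Or.inr ⟨rfl, hiv, hile⟩)⟩
            · simp only [hF, Finset.mem_filter] at hy
              refine ⟨?_, Or.inl ⟨hiv, hy.2.1, hy.2.2⟩⟩
              intro h
              exact H.loopless.irrefl _ (h ▸ hy.2.2)
        have hv0F : v0 ∉ F := by simp [hF]
        rw [← SimpleGraph.card_neighborFinset_eq_degree, hNi,
          Finset.card_insert_of_notMem hv0F, hFcard]
        rw [if_pos hile] at hvalI
        omega
      · have hNi : G.neighborFinset i = F := by
          ext y
          rw [SimpleGraph.mem_neighborFinset]
          show (i ≠ y ∧ _) ↔ _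
          constructor
          · rintro ⟨hne, h⟩
            rcases h with ⟨-, hy, hadj⟩ | ⟨h, -, -⟩ | ⟨-, -, hle⟩
            · simp only [hF, Finset.mem_filter]
              exact ⟨Finset.mem_univ _, hy, hadj⟩
            · exact absurd h hiv
            · exact absurd hle hile
          · intro hy
            simp only [hF, Finset.mem_filter] at hy
            refine ⟨?_, Or.inl ⟨hiv, hy.2.1, hy.2.2⟩⟩
            intro h
            exact H.loopless.irrefl _ (h ▸ hy.2.2)
        rw [← SimpleGraph.card_neighborFinset_eq_degree, hNi, hFcard]
        rw [if_neg hile] at hvalI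
        omega
end

section
/- Fix a real γ > 2 and for each integer N ≥ 2 let x_N = [ (γ−1)·H_{N−1,γ}/N + (N−1)^{1−γ} ]^{1/(1−γ)}, which is the unique positive real solving (N/((1−γ)·H_{N−1,γ}))·[(N−1)^{1−γ} − x^{1−γ}] = 1. Then lim_{N→∞} x_N / N^{1/(γ−1)} = ((γ−1)·ζ(γ))^{−1/(γ−1)}, where ζ is the Riemann zeta function. In particular x_N grows sublinearly in N. -/
open Filter

/-- The generalized harmonic number `H_{a,b} = ∑_{t=1}^{a} t^{-b}`. -/
noncomputable def Hgen (a : ℕ) (b : ℝ) : ℝ := ∑ t ∈ Finset.Icc 1 a, (t : ℝ) ^ (-b)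

/-- The continuum approximation to the expected maximum degree:
`x_N = [(γ-1)·H_{N-1,γ}/N + (N-1)^{1-γ}]^{1/(1-γ)}`. -/
noncomputable def xN (γ : ℝ) (N : ℕ) : ℝ :=
  ((γ - 1) * Hgen (N - 1) γ / N + ((N : ℝ) - 1) ^ (1 - γ)) ^ (1 / (1 - γ))

lemma zeta_re_eq' (γ : ℝ) (hγ : 2 < γ) : (riemannZeta γ).re = ∑' n : ℕ, (n:ℝ) ^ (-γ) := by
  have h1 : (1:ℝ) < (γ:ℂ).re := by simpa using by linarith
  rw [zeta_eq_tsum_one_div_nat_cpow h1]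
  rw [Complex.re_tsum (Complex.summable_one_div_nat_cpow.mpr h1)]
  congr 1; ext n
  rw [show ((n:ℕ):ℂ) = (((n:ℝ):ℂ)) by push_cast; ring,
    ← Complex.ofReal_cpow (by positivity : (0:ℝ) ≤ ((n:ℕ):ℝ)) γ,
    ← Complex.ofReal_one, ← Complex.ofReal_div, Complex.ofReal_re,
    Real.rpow_neg (by positivity), one_div]

lemma Hgen_eq_range' (γ : ℝ) (hγ : 2 < γ) (a : ℕ) :
    Hgen a γ = ∑ t ∈ Finset.range (a+1), (t:ℝ) ^ (-γ) := by
  refine Finset.sum_subset ?_ ?_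
  · intro x hx
    simp only [Finset.mem_Icc] at hx
    simp only [Finset.mem_range]; omega
  · intro x hx hx'
    simp only [Finset.mem_range] at hx
    simp only [Finset.mem_Icc] at hx'
    have : x = 0 := by omega
    subst this
    simp [Real.zero_rpow (by linarith : -γ ≠ 0)]

lemma Hgen_tendsto' (γ : ℝ) (hγ : 2 < γ) :
    Tendsto (fun N : ℕ => Hgen (N - 1) γ) atTop (nhds ((riemannZeta γ).re)) := by
  have hsum : Summable (fun n : ℕ => (n:ℝ) ^ (-γ)) :=
    Real.summable_nat_rpow.mpr (by linarith)
  rw [zeta_re_eq' γ hγ]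
  have h1 : Tendsto (fun n : ℕ => ∑ t ∈ Finset.range n, (t:ℝ) ^ (-γ)) atTop
      (nhds (∑' n : ℕ, (n:ℝ) ^ (-γ))) := hsum.hasSum.tendsto_sum_nat
  have h2 : Tendsto (fun N : ℕ => N - 1 + 1) atTop atTop := by
    apply tendsto_atTop_mono (fun n => by omega : ∀ n : ℕ, n ≤ n - 1 + 1) tendsto_id
  exact (h1.comp h2).congr fun N => (Hgen_eq_range' γ hγ (N-1)).symm

lemma zeta_re_pos' (γ : ℝ) (hγ : 2 < γ) : 0 < (riemannZeta γ).re := by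
  rw [zeta_re_eq' γ hγ]
  refine Summable.tsum_pos (Real.summable_nat_rpow.mpr (by linarith)) (fun n => by positivity) 1 ?_
  norm_num

lemma tail_tendsto' (γ : ℝ) (hγ : 2 < γ) :
    Tendsto (fun N : ℕ => (N:ℝ) * ((N:ℝ) - 1) ^ (1 - γ)) atTop (nhds 0) := by
  have hsub : Tendsto (fun N : ℕ => (N:ℝ) - 1) atTop atTop := by
    have := tendsto_natCast_atTop_atTop (R := ℝ)
    exact tendsto_atTop_add_const_right atTop (-1) this |>.congr fun N => by ring
  have hg : Tendsto (fun N : ℕ => 2 * ((N:ℝ) - 1) ^ (-(γ - 2))) atTop (nhds 0) := by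
    have := (tendsto_rpow_neg_atTop (by linarith : (0:ℝ) < γ - 2)).comp hsub
    simpa using this.const_mul 2
  refine squeeze_zero' ?_ ?_ hg
  · filter_upwards [eventually_ge_atTop 2] with N hN
    have hN1 : (0:ℝ) < (N:ℝ) - 1 := by
      have : (2:ℝ) ≤ (N:ℝ) := by exact_mod_cast hN
      linarith
    positivity
  · filter_upwards [eventually_ge_atTop 2] with N hN
    have hNR : (2:ℝ) ≤ (N:ℝ) := by exact_mod_cast hN
    have hN1 : (0:ℝ) < (N:ℝ) - 1 := by linarith
    have hr : (0:ℝ) ≤ ((N:ℝ) - 1) ^ (1 - γ) := (Real.rpow_pos_of_pos hN1 _).le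
    have e : ((N:ℝ) - 1) * ((N:ℝ) - 1) ^ (1 - γ) = ((N:ℝ) - 1) ^ (-(γ - 2)) := by
      rw [show -(γ - 2) = 1 + (1 - γ) by ring, Real.rpow_add hN1, Real.rpow_one]
    calc (N:ℝ) * ((N:ℝ) - 1) ^ (1 - γ)
        ≤ (2 * ((N:ℝ) - 1)) * ((N:ℝ) - 1) ^ (1 - γ) := by
          apply mul_le_mul_of_nonneg_right (by linarith) hr
      _ = 2 * (((N:ℝ) - 1) * ((N:ℝ) - 1) ^ (1 - γ)) := by ring
      _ = 2 * ((N:ℝ) - 1) ^ (-(γ - 2)) := by rw [e]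

lemma part1' (γ : ℝ) (hγ : 2 < γ) : ∀ N : ℕ, 2 ≤ N → ∀ x : ℝ, 0 < x →
      ((N : ℝ) / ((1 - γ) * Hgen (N - 1) γ) * (((N : ℝ) - 1) ^ (1 - γ) - x ^ (1 - γ)) = 1
        ↔ x = xN γ N) := by
  intro N hN x hx
  have hH : 0 < Hgen (N - 1) γ := by
    have h1 : (1:ℕ) ∈ Finset.Icc 1 (N-1) := by simp; omega
    exact Finset.sum_pos' (fun t _ => by positivity) ⟨1, h1, by norm_num⟩
  have hNR : (2:ℝ) ≤ (N:ℝ) := by exact_mod_cast hN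
  have hN0 : (0:ℝ) < N := by linarith
  have hN1 : (0:ℝ) < (N:ℝ) - 1 := by linarith
  have hγ1 : 1 - γ ≠ 0 := by linarith
  have hA : 0 < (γ - 1) * Hgen (N - 1) γ / N + ((N : ℝ) - 1) ^ (1 - γ) :=
    add_pos (div_pos (mul_pos (by linarith) hH) hN0) (Real.rpow_pos_of_pos hN1 (1 - γ))
  set A := (γ - 1) * Hgen (N - 1) γ / N + ((N : ℝ) - 1) ^ (1 - γ) with hAdef
  have key : ((N : ℝ) / ((1 - γ) * Hgen (N - 1) γ) * (((N : ℝ) - 1) ^ (1 - γ) - x ^ (1 - γ)) = 1)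
      ↔ x ^ (1 - γ) = A := by
    rw [hAdef]
    constructor
    · intro h
      have h2 : (N : ℝ) * (((N : ℝ) - 1) ^ (1 - γ) - x ^ (1 - γ)) = (1 - γ) * Hgen (N - 1) γ := by
        field_simp at h
        linarith [h]
      have hne : (N:ℝ) ≠ 0 := ne_of_gt hN0
      field_simp
      nlinarith [h2]
    · intro h
      rw [h]
      field_simp
      ring
  rw [key]
  unfold xN
  rw [← hAdef]
  constructor
  · intro h
    rw [← h, ← Real.rpow_mul hx.le, mul_one_div_cancel hγ1, Real.rpow_one]
  · intro h
    rw [h, ← Real.rpow_mul hA.le, one_div, inv_mul_cancel₀ hγ1, Real.rpow_one]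

lemma part2' (γ : ℝ) (hγ : 2 < γ) :
    Tendsto (fun N : ℕ => xN γ N / (N : ℝ) ^ (1 / (γ - 1))) atTop
      (nhds (((γ - 1) * (riemannZeta γ).re) ^ (-(1 / (γ - 1))))) := by
  have hexp : 1 / (1 - γ) = -(1 / (γ - 1)) := by
    rw [show (1:ℝ) - γ = -(γ - 1) by ring, div_neg]
  set L := (γ - 1) * (riemannZeta γ).re with hL
  have hLpos : 0 < L := mul_pos (by linarith) (zeta_re_pos' γ hγ)
  have hB : Tendsto (fun N : ℕ => (γ - 1) * Hgen (N - 1) γ + (N:ℝ) * ((N:ℝ) - 1) ^ (1 - γ))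
      atTop (nhds L) := by
    have := ((Hgen_tendsto' γ hγ).const_mul (γ - 1)).add (tail_tendsto' γ hγ)
    simpa using this
  have hmain := hB.rpow_const (p := 1 / (1 - γ)) (Or.inl hLpos.ne')
  rw [← hexp]
  refine hmain.congr' ?_
  filter_upwards [eventually_ge_atTop 2] with N hN
  have hNR : (2:ℝ) ≤ (N:ℝ) := by exact_mod_cast hN
  have hN0 : (0:ℝ) < N := by linarith
  have hN1 : (0:ℝ) < (N:ℝ) - 1 := by linarith
  have hH : 0 < Hgen (N - 1) γ := by
    have h1 : (1:ℕ) ∈ Finset.Icc 1 (N-1) := by simp; omega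
    exact Finset.sum_pos' (fun t _ => by positivity) ⟨1, h1, by norm_num⟩
  have hA : 0 < (γ - 1) * Hgen (N - 1) γ / N + ((N : ℝ) - 1) ^ (1 - γ) :=
    add_pos (div_pos (mul_pos (by linarith) hH) hN0) (Real.rpow_pos_of_pos hN1 (1 - γ))
  have hBN : (γ - 1) * Hgen (N - 1) γ + (N:ℝ) * ((N:ℝ) - 1) ^ (1 - γ)
      = (N:ℝ) * ((γ - 1) * Hgen (N - 1) γ / N + ((N : ℝ) - 1) ^ (1 - γ)) := by
    field_simp
  rw [hBN, Real.mul_rpow hN0.le hA.le]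
  unfold xN
  rw [hexp, Real.rpow_neg hN0.le, div_eq_mul_inv]
  ring

lemma part3' (γ : ℝ) (hγ : 2 < γ) :
    Tendsto (fun N : ℕ => xN γ N / N) atTop (nhds 0) := by
  have hc1 : 1 / (γ - 1) < 1 := by
    rw [div_lt_one (by linarith)]; linarith
  have h0 : Tendsto (fun N : ℕ => (N:ℝ) ^ (1 / (γ - 1) - 1)) atTop (nhds 0) := by
    have := (tendsto_rpow_neg_atTop (by linarith : (0:ℝ) < 1 - 1 / (γ - 1))).comp
      (tendsto_natCast_atTop_atTop (R := ℝ))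
    exact this.congr fun N => by rw [Function.comp]; ring_nf
  have := (part2' γ hγ).mul h0
  rw [mul_zero] at this
  refine this.congr' ?_
  filter_upwards [eventually_ge_atTop 1] with N hN
  have hN0 : (0:ℝ) < N := by exact_mod_cast Nat.lt_of_lt_of_le Nat.zero_lt_one hN
  have hc : ((N:ℝ) ^ (1 / (γ - 1))) ≠ 0 := (Real.rpow_pos_of_pos hN0 _).ne'
  rw [Real.rpow_sub hN0, Real.rpow_one]
  field_simp

/-- For `γ > 2`, `x_N` is the unique positive real solving
`(N/((1-γ)·H_{N-1,γ}))·[(N-1)^{1-γ} - x^{1-γ}] = 1`, and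
`lim_{N→∞} x_N / N^{1/(γ-1)} = ((γ-1)·ζ(γ))^{-1/(γ-1)}`;
in particular `x_N` grows sublinearly in `N`. -/
theorem max_degree_scaling_gamma_gt_two (γ : ℝ) (hγ : 2 < γ) :
    (∀ N : ℕ, 2 ≤ N → ∀ x : ℝ, 0 < x →
      ((N : ℝ) / ((1 - γ) * Hgen (N - 1) γ) * (((N : ℝ) - 1) ^ (1 - γ) - x ^ (1 - γ)) = 1
        ↔ x = xN γ N)) ∧
    Tendsto (fun N : ℕ => xN γ N / (N : ℝ) ^ (1 / (γ - 1))) atTop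
      (nhds (((γ - 1) * (riemannZeta γ).re) ^ (-(1 / (γ - 1))))) ∧
    Tendsto (fun N : ℕ => xN γ N / N) atTop (nhds 0) :=
  ⟨part1' γ hγ, part2' γ hγ, part3' γ hγ⟩
end

section
/- Fix a real γ with 1 < γ < 2 and for each integer N ≥ 2 let x_N = [ (γ−1)·H_{N−1,γ}/N + (N−1)^{1−γ} ]^{1/(1−γ)}, which is the unique positive real solving (N/((1−γ)·H_{N−1,γ}))·[(N−1)^{1−γ} − x^{1−γ}] = 1. Then lim_{N→∞} x_N / N = 1; in particular the expected maximum degree grows linearly with N. -/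
open Filter

/-- For `1 < γ < 2`, `x_N` is the unique positive real solving
`(N/((1-γ)·H_{N-1,γ}))·[(N-1)^{1-γ} - x^{1-γ}] = 1`, and `lim_{N→∞} x_N / N = 1`;
in particular the expected maximum degree grows linearly with `N`. -/
theorem max_degree_scaling_gamma_between_one_two (γ : ℝ) (h1 : 1 < γ) (h2 : γ < 2) :
    (∀ N : ℕ, 2 ≤ N → ∀ x : ℝ, 0 < x →
      ((N : ℝ) / ((1 - γ) * Hgen (N - 1) γ) * (((N : ℝ) - 1) ^ (1 - γ) - x ^ (1 - γ)) = 1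
        ↔ x = xN γ N)) ∧
    Tendsto (fun N : ℕ => xN γ N / N) atTop (nhds 1) := by
  have hne : (1 : ℝ) - γ ≠ 0 := by linarith
  have hHpos : ∀ a : ℕ, 1 ≤ a → 0 < Hgen a γ := by
    intro a ha
    apply Finset.sum_pos
    · intro t ht
      simp only [Finset.mem_Icc] at ht
      exact Real.rpow_pos_of_pos (by exact_mod_cast ht.1) _
    · exact ⟨1, by simp [ha]⟩
  constructor
  · intro N hN x hx
    have hNpos : (0 : ℝ) < N := by exact_mod_cast Nat.lt_of_lt_of_le (by norm_num) hN
    have hN1 : (1 : ℝ) ≤ (N : ℝ) - 1 := by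
      have : (2 : ℝ) ≤ N := by exact_mod_cast hN
      linarith
    have hH : 0 < Hgen (N - 1) γ := hHpos _ (by omega)
    set H := Hgen (N - 1) γ
    set A := (γ - 1) * H / N + ((N : ℝ) - 1) ^ (1 - γ) with hAdef
    have hApos : 0 < A := by
      have := Real.rpow_pos_of_pos (lt_of_lt_of_le one_pos hN1) (1 - γ)
      have h2' : 0 < (γ - 1) * H / N := div_pos (mul_pos (by linarith) hH) hNpos
      rw [hAdef]; linarith
    have key : ((N : ℝ) / ((1 - γ) * H) * (((N : ℝ) - 1) ^ (1 - γ) - x ^ (1 - γ)) = 1)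
        ↔ x ^ (1 - γ) = A := by
      rw [hAdef]
      rw [div_mul_eq_mul_div, div_eq_one_iff_eq (by
        intro h; rcases mul_eq_zero.1 h with h' | h' <;> [exact hne h'; exact hH.ne' h'])]
      constructor
      · intro h; field_simp at h ⊢; nlinarith [h]
      · intro h; rw [h]; field_simp; ring
    rw [key]
    constructor
    · intro h
      have : x = (x ^ (1 - γ)) ^ (1 - γ)⁻¹ := (Real.rpow_rpow_inv hx.le hne).symm
      rw [this, h, xN, one_div]
    · intro h
      rw [h, xN, one_div, Real.rpow_inv_rpow hApos.le hne]
  · -- limit part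
    have hsum : Summable (fun t : ℕ => (t : ℝ) ^ (-γ)) :=
      Real.summable_nat_rpow.2 (by linarith)
    have hHtend : Tendsto (fun N : ℕ => Hgen (N - 1) γ) atTop
        (nhds (∑' t : ℕ, (t : ℝ) ^ (-γ))) := by
      have h0 : ∀ a : ℕ, Hgen a γ = ∑ t ∈ Finset.range (a + 1), (t : ℝ) ^ (-γ) := by
        intro a
        have : Finset.range (a + 1) = insert 0 (Finset.Icc 1 a) := by
          ext t; simp [Finset.mem_range, Finset.mem_Icc]; omega
        rw [this, Finset.sum_insert (by simp)]
        simp [Hgen, Real.zero_rpow (show -γ ≠ 0 by linarith)]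
      have hmono : Tendsto (fun N : ℕ => N - 1 + 1) atTop atTop := by
        refine tendsto_atTop_atTop.2 fun b => ⟨b, fun a ha => by omega⟩
      have := (hsum.hasSum.tendsto_sum_nat).comp hmono
      exact this.congr fun N => (h0 (N - 1)).symm
    set c := 1 / (1 - γ) with hc
    set B := fun N : ℕ => (γ - 1) * Hgen (N - 1) γ / ((N : ℝ) ^ ((2 : ℝ) - γ))
      + (((N : ℝ) - 1) / N) ^ (1 - γ) with hB
    have hBtend : Tendsto B atTop (nhds 1) := by
      have h1' : Tendsto (fun N : ℕ => (γ - 1) * Hgen (N - 1) γ / ((N : ℝ) ^ ((2 : ℝ) - γ)))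
          atTop (nhds 0) := by
        have hpow : Tendsto (fun N : ℕ => (N : ℝ) ^ ((2 : ℝ) - γ)) atTop atTop :=
          (tendsto_rpow_atTop (by linarith)).comp tendsto_natCast_atTop_atTop
        have hconst : Tendsto (fun _ : ℕ => γ - 1) atTop (nhds (γ - 1)) := tendsto_const_nhds
        have := (hconst.mul hHtend).mul hpow.inv_tendsto_atTop
        simpa [div_eq_mul_inv, mul_zero] using this
      have h2' : Tendsto (fun N : ℕ => (((N : ℝ) - 1) / N) ^ (1 - γ)) atTop (nhds 1) := by
        have hb : Tendsto (fun N : ℕ => ((N : ℝ) - 1) / N) atTop (nhds 1) := by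
          have : Tendsto (fun N : ℕ => 1 - 1 / (N : ℝ)) atTop (nhds 1) := by
            simpa using (tendsto_const_nhds (x := (1:ℝ)) (f := atTop)).sub (tendsto_one_div_atTop_nhds_zero_nat)
          refine this.congr' ?_
          filter_upwards [eventually_ge_atTop 1] with N hN
          have : (N : ℝ) ≠ 0 := by positivity
          field_simp
        have hcont : ContinuousAt (fun b : ℝ => b ^ (1 - γ)) 1 :=
          Real.continuousAt_rpow_const 1 _ (Or.inl one_ne_zero)
        have := hcont.tendsto.comp hb
        simpa [Real.one_rpow, Function.comp_def] using this
      have := h1'.add h2'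
      simpa using this
    have hcont2 : ContinuousAt (fun b : ℝ => b ^ c) 1 :=
      Real.continuousAt_rpow_const 1 _ (Or.inl one_ne_zero)
    have hBc : Tendsto (fun N : ℕ => B N ^ c) atTop (nhds 1) := by
      have := hcont2.tendsto.comp hBtend
      simpa [Real.one_rpow, Function.comp_def] using this
    refine hBc.congr' ?_
    filter_upwards [eventually_ge_atTop 2] with N hN
    have hn : (0 : ℝ) < N := by exact_mod_cast Nat.lt_of_lt_of_le (by norm_num) hN
    have hn1 : (1 : ℝ) ≤ (N : ℝ) - 1 := by
      have : (2 : ℝ) ≤ N := by exact_mod_cast hN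
      linarith
    have hH : 0 < Hgen (N - 1) γ := hHpos _ (by omega)
    set H := Hgen (N - 1) γ
    set n := (N : ℝ)
    have hApos : 0 < (γ - 1) * H / n + (n - 1) ^ (1 - γ) := by
      have := Real.rpow_pos_of_pos (lt_of_lt_of_le one_pos hn1) (1 - γ)
      have h2' : 0 < (γ - 1) * H / n := div_pos (mul_pos (by linarith) hH) hn
      linarith
    have e1 : n ^ ((2 : ℝ) - γ) = n * n ^ (1 - γ) := by
      rw [show (2 : ℝ) - γ = 1 + (1 - γ) by ring, Real.rpow_add hn, Real.rpow_one]
    have e2 : ((n - 1) / n) ^ (1 - γ) = (n - 1) ^ (1 - γ) / n ^ (1 - γ) :=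
      Real.div_rpow (by linarith) hn.le _
    have eB : B N = ((γ - 1) * H / n + (n - 1) ^ (1 - γ)) / n ^ (1 - γ) := by
      rw [hB]
      simp only
      rw [e1, e2, ← div_div, ← add_div]
    have hnp : 0 < n ^ (1 - γ) := Real.rpow_pos_of_pos hn _
    rw [eB, Real.div_rpow hApos.le hnp.le, hc, one_div,
      Real.rpow_rpow_inv hn.le hne, xN]
    simp [one_div]
    rfl
end

section
/- Fix a real γ > 1. For every integer N ≥ 2, the expected maximum degree satisfies d̂_N(γ) ≤ 1 + (N/(γ−1))^{1/(γ−1)}. -/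
open Filter

/-- The expected maximum degree of a power-law degree sequence with exponent `γ` on
`N` nodes: `d̂_N(γ) = max { x ∈ {1,…,N-1} : N · ∑_{k=x}^{N-1} k^{-γ} ≥ H_{N-1,γ} }`. -/
noncomputable def dhat (N : ℕ) (γ : ℝ) : ℕ :=
  sSup {x : ℕ | 1 ≤ x ∧ x ≤ N - 1 ∧
    Hgen (N - 1) γ ≤ (N : ℝ) * ∑ k ∈ Finset.Icc x (N - 1), (k : ℝ) ^ (-γ)}

lemma step_bound (γ : ℝ) (hγ : 1 < γ) (a : ℝ) (ha : 1 ≤ a) :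
    (γ - 1) * (a + 1) ^ (-γ) ≤ a ^ (1 - γ) - (a + 1) ^ (1 - γ) := by
  have ha0 : (0:ℝ) < a := by linarith
  obtain ⟨c, hc, hceq⟩ := exists_hasDerivAt_eq_slope (fun t => t ^ (1 - γ))
      (fun t => (1 - γ) * t ^ (-γ)) (by linarith : a < a + 1)
      (fun t ht => (Real.continuousAt_rpow_const t (1 - γ)
        (Or.inl (by simp only [Set.mem_Icc] at ht; nlinarith))).continuousWithinAt)
      (fun t ht => by
        have ht0 : t ≠ 0 := by simp only [Set.mem_Ioo] at ht; nlinarith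
        have := Real.hasDerivAt_rpow_const (p := 1 - γ) (Or.inl ht0) (x := t)
        convert this using 1
        ring_nf)
  have hc0 : 0 < c := by simp only [Set.mem_Ioo] at hc; linarith
  have hcle : c ≤ a + 1 := by simp only [Set.mem_Ioo] at hc; linarith
  have hmono : (a + 1) ^ (-γ) ≤ c ^ (-γ) :=
    Real.rpow_le_rpow_of_nonpos hc0 hcle (by linarith)
  have : (1 - γ) * c ^ (-γ) = (a + 1) ^ (1 - γ) - a ^ (1 - γ) := by
    rw [hceq]; ring_nf
  nlinarith [this]

lemma sum_bound (γ : ℝ) (hγ : 1 < γ) (x m : ℕ) (hx : 2 ≤ x) :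
    (γ - 1) * ∑ k ∈ Finset.Icc x m, (k : ℝ) ^ (-γ) ≤ ((x : ℝ) - 1) ^ (1 - γ) := by
  rcases le_or_gt x (m + 1) with h | h
  · set F : ℕ → ℝ := fun i => ((x : ℝ) + i - 1) ^ (1 - γ) with hF
    have key : ∀ i : ℕ, (γ - 1) * ((x + i : ℕ) : ℝ) ^ (-γ) ≤ F i - F (i + 1) := by
      intro i
      have h1 : (1:ℝ) ≤ (x:ℝ) + i - 1 := by
        have : (2:ℝ) ≤ (x:ℝ) := by exact_mod_cast hx
        have : (0:ℝ) ≤ (i:ℝ) := Nat.cast_nonneg i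
        linarith
      have := step_bound γ hγ ((x:ℝ) + i - 1) h1
      have e1 : (x:ℝ) + i - 1 + 1 = ((x + i : ℕ) : ℝ) := by push_cast; ring
      have e2 : (x:ℝ) + (i+1:ℕ) - 1 = (x:ℝ) + i - 1 + 1 := by push_cast; ring
      have eF1 : F (i + 1) = ((x:ℝ) + i - 1 + 1) ^ (1 - γ) := by
        simp only [hF]; rw [e2]
      have eF0 : F i = ((x:ℝ) + i - 1) ^ (1 - γ) := rfl
      rw [e1] at this
      rw [eF0, eF1, e1]
      linarith [this]
    calc (γ - 1) * ∑ k ∈ Finset.Icc x m, (k : ℝ) ^ (-γ)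
        = ∑ k ∈ Finset.Icc x m, (γ - 1) * (k : ℝ) ^ (-γ) := by rw [Finset.mul_sum]
      _ = ∑ i ∈ Finset.range (m + 1 - x), (γ - 1) * ((x + i : ℕ) : ℝ) ^ (-γ) := by
          rw [← Finset.Ico_add_one_right_eq_Icc, Finset.sum_Ico_eq_sum_range]
      _ ≤ ∑ i ∈ Finset.range (m + 1 - x), (F i - F (i + 1)) :=
          Finset.sum_le_sum fun i _ => key i
      _ = F 0 - F (m + 1 - x) := Finset.sum_range_sub' F (m + 1 - x)
      _ ≤ F 0 := by
          have : 0 ≤ F (m + 1 - x) := Real.rpow_nonneg (by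
            have : (2:ℝ) ≤ (x:ℝ) := by exact_mod_cast hx
            have : (0:ℝ) ≤ ((m + 1 - x : ℕ):ℝ) := Nat.cast_nonneg _
            linarith) _
          linarith
      _ = ((x : ℝ) - 1) ^ (1 - γ) := by simp [hF]
  · rw [Finset.Icc_eq_empty (by omega)]
    simp only [Finset.sum_empty, mul_zero]
    exact Real.rpow_nonneg (by
      have : (2:ℝ) ≤ (x:ℝ) := by exact_mod_cast hx
      linarith) _

/-- For `γ > 1` and every integer `N ≥ 2`, the expected maximum degree satisfies
`d̂_N(γ) ≤ 1 + (N/(γ-1))^{1/(γ-1)}`. -/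
theorem expected_max_degree_bound (γ : ℝ) (hγ : 1 < γ) (N : ℕ) (hN : 2 ≤ N) :
    (dhat N γ : ℝ) ≤ 1 + ((N : ℝ) / (γ - 1)) ^ (1 / (γ - 1)) := by
  set S := {x : ℕ | 1 ≤ x ∧ x ≤ N - 1 ∧
    Hgen (N - 1) γ ≤ (N : ℝ) * ∑ k ∈ Finset.Icc x (N - 1), (k : ℝ) ^ (-γ)} with hS
  have hne : S.Nonempty := by
    refine ⟨1, le_refl 1, by omega, ?_⟩
    have hsum : Hgen (N-1) γ = ∑ k ∈ Finset.Icc 1 (N - 1), (k : ℝ) ^ (-γ) := rfl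
    rw [hsum]
    have hnn : 0 ≤ ∑ k ∈ Finset.Icc 1 (N - 1), (k : ℝ) ^ (-γ) :=
      Finset.sum_nonneg fun k _ => Real.rpow_nonneg (Nat.cast_nonneg k) _
    exact le_mul_of_one_le_left hnn (by exact_mod_cast (by omega : 1 ≤ N))
  have hbdd : BddAbove S := ⟨N - 1, fun x hx => hx.2.1⟩
  have hmem : sSup S ∈ S := Nat.sSup_mem hne hbdd
  obtain ⟨hx1, hxN, hxineq⟩ := hmem
  set x := sSup S
  have hrnn : 0 ≤ ((N : ℝ) / (γ - 1)) ^ (1 / (γ - 1)) :=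
    Real.rpow_nonneg (div_nonneg (Nat.cast_nonneg N) (by linarith)) _
  show (x : ℝ) ≤ 1 + ((N : ℝ) / (γ - 1)) ^ (1 / (γ - 1))
  rcases eq_or_lt_of_le hx1 with h1 | h2
  · rw [← h1]; push_cast; linarith
  · -- x ≥ 2
    have hx2 : 2 ≤ x := h2
    have hH1 : (1:ℝ) ≤ Hgen (N-1) γ := by
      have h1mem : 1 ∈ Finset.Icc 1 (N-1) := Finset.mem_Icc.mpr ⟨le_refl 1, by omega⟩
      have := Finset.single_le_sum (f := fun t : ℕ => (t:ℝ) ^ (-γ))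
        (fun k _ => Real.rpow_nonneg (Nat.cast_nonneg k) _) h1mem
      simpa [Hgen] using this
    have hsb := sum_bound γ hγ x (N-1) hx2
    have hNpos : (0:ℝ) < N := by positivity
    have hsumnn : 0 ≤ ∑ k ∈ Finset.Icc x (N - 1), (k : ℝ) ^ (-γ) :=
      Finset.sum_nonneg fun k _ => Real.rpow_nonneg (Nat.cast_nonneg k) _
    -- γ - 1 ≤ N * (x-1)^(1-γ)
    have key : γ - 1 ≤ (N : ℝ) * ((x : ℝ) - 1) ^ (1 - γ) := by
      have h1 : γ - 1 ≤ (γ - 1) * ((N : ℝ) * ∑ k ∈ Finset.Icc x (N - 1), (k : ℝ) ^ (-γ)) := by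
        nlinarith [hxineq]
      calc γ - 1 ≤ (N:ℝ) * ((γ - 1) * ∑ k ∈ Finset.Icc x (N - 1), (k : ℝ) ^ (-γ)) := by
            linarith [h1, (by ring : (γ - 1) * ((N : ℝ) * ∑ k ∈ Finset.Icc x (N - 1), (k : ℝ) ^ (-γ)) = (N:ℝ) * ((γ - 1) * ∑ k ∈ Finset.Icc x (N - 1), (k : ℝ) ^ (-γ)))]
        _ ≤ (N : ℝ) * ((x : ℝ) - 1) ^ (1 - γ) :=
            mul_le_mul_of_nonneg_left hsb (le_of_lt hNpos)
    set y : ℝ := (x : ℝ) - 1 with hy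
    have hy1 : (1:ℝ) ≤ y := by
      have : (2:ℝ) ≤ (x:ℝ) := by exact_mod_cast hx2
      simp [hy]; linarith
    have hy0 : 0 < y := by linarith
    have hpow : y ^ (γ - 1) ≤ (N : ℝ) / (γ - 1) := by
      have hyneg : y ^ (1 - γ) = (y ^ (γ - 1))⁻¹ := by
        rw [← Real.rpow_neg (le_of_lt hy0)]; ring_nf
      have hposp : 0 < y ^ (γ - 1) := Real.rpow_pos_of_pos hy0 _
      rw [hyneg] at key
      rw [le_div_iff₀ (by linarith : (0:ℝ) < γ - 1)]
      have h3 := mul_le_mul_of_nonneg_left key hposp.le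
      calc y ^ (γ - 1) * (γ - 1) = y ^ (γ - 1) * (γ - 1) := rfl
        _ ≤ y ^ (γ - 1) * ((N : ℝ) * (y ^ (γ - 1))⁻¹) := h3
        _ = (N : ℝ) := by field_simp
    have hfinal : y ≤ ((N : ℝ) / (γ - 1)) ^ (1 / (γ - 1)) := by
      have := Real.rpow_le_rpow (le_of_lt (Real.rpow_pos_of_pos hy0 (γ - 1))) hpow
        (div_nonneg zero_le_one (by linarith) : (0:ℝ) ≤ 1 / (γ - 1))
      rw [one_div, Real.rpow_rpow_inv (le_of_lt hy0) (by linarith : γ - 1 ≠ 0)] at this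
      rw [one_div]
      exact this
    have : (x:ℝ) = y + 1 := by simp [hy]
    linarith
end

section
/- Fix a real γ < 2. Then lim_{N→∞} d̂_N(γ) / N = 1, i.e., the expected maximum degree of a power-law degree sequence with exponent γ < 2 grows linearly, of the same order as the number of nodes N. -/
open Filter

open Finset Real in
lemma bern_step {s : ℝ} (hs0 : 0 < s) (hs1 : s ≤ 1) (n : ℕ) :
    (n : ℝ) ^ s + s * ((n : ℝ) + 1) ^ (s - 1) ≤ ((n : ℝ) + 1) ^ s := by
  have hn1 : (0:ℝ) < (n:ℝ) + 1 := by positivity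
  have key : ((n:ℝ)) ^ s ≤ ((n:ℝ)+1) ^ s * (1 - s / ((n:ℝ)+1)) := by
    have hb : (1 + (-(1/((n:ℝ)+1)))) ^ s ≤ 1 + s * (-(1/((n:ℝ)+1))) := by
      apply rpow_one_add_le_one_add_mul_self _ hs0.le hs1
      have : 1/((n:ℝ)+1) ≤ 1 := by
        rw [div_le_one hn1]; linarith [Nat.cast_nonneg (α := ℝ) n]
      linarith
    have h1 : (1 + (-(1/((n:ℝ)+1)))) = (n:ℝ)/((n:ℝ)+1) := by field_simp; ring
    rw [h1] at hb
    have h2 : ((n:ℝ)/((n:ℝ)+1)) ^ s = (n:ℝ)^s / ((n:ℝ)+1)^s :=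
      Real.div_rpow (Nat.cast_nonneg n) hn1.le s
    rw [h2, div_le_iff₀ (by positivity)] at hb
    calc (n:ℝ)^s ≤ (1 + s * (-(1/((n:ℝ)+1)))) * ((n:ℝ)+1)^s := hb
    _ = ((n:ℝ)+1)^s * (1 - s/((n:ℝ)+1)) := by ring
  have h3 : ((n:ℝ)+1)^s * (s/((n:ℝ)+1)) = s * ((n:ℝ)+1)^(s-1) := by
    rw [Real.rpow_sub hn1, Real.rpow_one]; field_simp
  nlinarith [key, h3]

lemma sum_rpow_le {s : ℝ} (hs0 : 0 < s) (hs1 : s ≤ 1) (n : ℕ) :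
    ∑ k ∈ Finset.Icc 1 n, (k:ℝ) ^ (s - 1) ≤ (n:ℝ) ^ s / s := by
  induction n with
  | zero => simp [Real.zero_rpow (ne_of_gt hs0)]
  | succ n ih =>
    rw [Finset.sum_Icc_succ_top (by omega)]
    have := bern_step hs0 hs1 n
    push_cast
    have h4 : ((n:ℝ)^s + s*((n:ℝ)+1)^(s-1))/s ≤ ((n:ℝ)+1)^s/s := by gcongr
    have h5 : ((n:ℝ)^s + s*((n:ℝ)+1)^(s-1))/s = (n:ℝ)^s/s + ((n:ℝ)+1)^(s-1) := by
      field_simp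
    linarith

lemma dhat_le (N : ℕ) (γ : ℝ) : dhat N γ ≤ N - 1 := by
  apply csSup_le'
  rintro y ⟨-, h, -⟩
  exact h

lemma dhat_lower (γ : ℝ) (hγ : γ < 2) {ε : ℝ} (hε0 : 0 < ε) (hε : ε ≤ 1/2) :
    ∀ᶠ N : ℕ in atTop, (1 - ε) * N ≤ (dhat N γ : ℝ) := by
  -- eventual numeric conditions
  have hev1 : ∀ᶠ N : ℕ in atTop, (8:ℝ)/ε ≤ (N:ℝ) :=
    tendsto_natCast_atTop_atTop.eventually_ge_atTop _
  have hev2 : ∀ᶠ N : ℕ in atTop, (2:ℝ)/((1 - γ/2)*ε) ≤ (N:ℝ)^(1 - γ/2) := by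
    have hs0 : 0 < 1 - γ/2 := by linarith
    exact ((tendsto_rpow_atTop hs0).comp tendsto_natCast_atTop_atTop).eventually_ge_atTop _
  have hev3 : ∀ᶠ N : ℕ in atTop, (2:ℝ)^(-γ) ≤ (ε/2) * (N:ℝ) := by
    have := tendsto_natCast_atTop_atTop (R := ℝ)
    have h2 : Tendsto (fun N : ℕ => (ε/2) * (N:ℝ)) atTop atTop :=
      this.const_mul_atTop (by linarith)
    exact h2.eventually_ge_atTop _
  filter_upwards [hev1, hev2, hev3] with N hN1 hN2 hN3
  -- basic facts
  have hNR : (8:ℝ) ≤ (N:ℝ) := by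
    have : (8:ℝ) ≤ 8/ε := by
      rw [le_div_iff₀ hε0]; nlinarith
    linarith [hN1, this.trans hN1]
  have hεN : (4:ℝ) ≤ ε * N := by
    have := hN1
    rw [div_le_iff₀ hε0] at this
    nlinarith
  have hNpos : (0:ℝ) < N := by linarith
  have hN2nat : 2 ≤ N := by exact_mod_cast (by linarith : (2:ℝ) ≤ (N:ℝ))
  set m : ℕ := Nat.floor (ε * N) with hm_def
  have hm_le : (m:ℝ) ≤ ε * N := Nat.floor_le (by positivity)
  have hm_gt : ε * N - 1 < (m:ℝ) := by
    have := Nat.lt_floor_add_one (ε * N)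
    push_cast at this ⊢
    linarith
  have hm_half : ε * N / 2 ≤ (m:ℝ) := by linarith
  have hm1 : 1 ≤ m := by
    have : (1:ℝ) ≤ (m:ℝ) := by linarith
    exact_mod_cast this
  have hmN : (m:ℝ) ≤ (N:ℝ)/2 := by nlinarith
  have hmlt : m < N := by
    have : (m:ℝ) < (N:ℝ) := by linarith
    exact_mod_cast this
  set x : ℕ := N - m with hx_def
  have hxR : (x:ℝ) = (N:ℝ) - (m:ℝ) := by
    rw [hx_def]; push_cast [Nat.cast_sub hmlt.le]; ring
  have hx1 : 1 ≤ x := by omega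
  have hxle : x ≤ N - 1 := by omega
  have hxhalf : (N:ℝ)/2 ≤ (x:ℝ) := by rw [hxR]; linarith
  have hnR : ((N-1 : ℕ):ℝ) = (N:ℝ) - 1 := by push_cast [Nat.cast_sub (by omega : 1 ≤ N)]; ring
  have hn1R : (1:ℝ) ≤ ((N-1:ℕ):ℝ) := by rw [hnR]; linarith
  have hn_posR : (0:ℝ) < ((N-1:ℕ):ℝ) := by linarith
  have hcard : (Finset.Icc x (N-1)).card = m := by
    rw [Nat.card_Icc]; omega
  -- the key inequality
  have hkey : Hgen (N - 1) γ ≤ (N : ℝ) * ∑ k ∈ Finset.Icc x (N - 1), (k : ℝ) ^ (-γ) := by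
    rcases le_or_gt 0 γ with h0 | h0
    · -- case 0 ≤ γ < 2
      set s : ℝ := 1 - γ/2 with hs_def
      have hs0 : 0 < s := by rw [hs_def]; linarith
      have hs1 : s ≤ 1 := by rw [hs_def]; linarith
      have htot : Hgen (N-1) γ ≤ ((N-1:ℕ):ℝ)^s / s := by
        refine le_trans ?_ (sum_rpow_le hs0 hs1 (N-1))
        apply Finset.sum_le_sum
        intro k hk
        have hk1 : (1:ℝ) ≤ (k:ℝ) := by
          have := (Finset.mem_Icc.mp hk).1
          exact_mod_cast this
        exact Real.rpow_le_rpow_of_exponent_le hk1 (by rw [hs_def]; linarith)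
      have htail : (m:ℝ) * ((N-1:ℕ):ℝ)^(-γ) ≤ ∑ k ∈ Finset.Icc x (N-1), (k:ℝ)^(-γ) := by
        have := Finset.card_nsmul_le_sum (Finset.Icc x (N-1))
          (fun k => (k:ℝ)^(-γ)) (((N-1:ℕ):ℝ)^(-γ)) ?_
        · rwa [hcard, nsmul_eq_mul] at this
        · intro k hk
          rcases Finset.mem_Icc.mp hk with ⟨hk1, hk2⟩
          have hkpos : (0:ℝ) < (k:ℝ) := by
            have : 1 ≤ k := le_trans hx1 hk1
            exact_mod_cast Nat.lt_of_lt_of_le Nat.zero_lt_one this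
          exact Real.rpow_le_rpow_of_nonpos hkpos (by exact_mod_cast hk2) (by linarith)
      -- numeric: (N-1)^s/s ≤ N * (m * (N-1)^(-γ))
      have hA : (0:ℝ) < ((N-1:ℕ):ℝ)^(-γ) := Real.rpow_pos_of_pos hn_posR _
      have hB : ((N-1:ℕ):ℝ)^s = ((N-1:ℕ):ℝ)^(s+γ) * ((N-1:ℕ):ℝ)^(-γ) := by
        rw [← Real.rpow_add hn_posR]; ring_nf
      have hBle : ((N-1:ℕ):ℝ)^(s+γ) ≤ (N:ℝ)^(s+γ) :=
        Real.rpow_le_rpow hn_posR.le (by rw [hnR]; linarith) (by linarith)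
      have hNsplit : (N:ℝ)^(s+γ) = (N:ℝ)^2 * ((N:ℝ)^s)⁻¹ := by
        have : (N:ℝ)^(s+γ) = (N:ℝ)^((2:ℝ) + (-s)) := by rw [hs_def]; ring_nf
        rw [this, Real.rpow_add hNpos, Real.rpow_neg hNpos.le,
          Real.rpow_two]
      have hNs_pos : (0:ℝ) < (N:ℝ)^s := Real.rpow_pos_of_pos hNpos _
      have hNs : ((N:ℝ)^s)⁻¹ ≤ s*ε/2 := by
        have hsε : (0:ℝ) < s*ε := mul_pos hs0 hε0
        have h2 : (0:ℝ) < 2/(s*ε) := by positivity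
        have h3 := one_div_le_one_div_of_le h2 hN2
        rw [one_div, one_div_div] at h3
        linarith
      have hfinal : ((N-1:ℕ):ℝ)^s / s ≤ (N:ℝ) * ((m:ℝ) * ((N-1:ℕ):ℝ)^(-γ)) := by
        rw [hB]
        have h1 : ((N-1:ℕ):ℝ)^(s+γ) ≤ (N:ℝ)^2 * (s*ε/2) := by
          calc ((N-1:ℕ):ℝ)^(s+γ) ≤ (N:ℝ)^(s+γ) := hBle
          _ = (N:ℝ)^2 * ((N:ℝ)^s)⁻¹ := hNsplit
          _ ≤ (N:ℝ)^2 * (s*ε/2) := by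
              apply mul_le_mul_of_nonneg_left hNs; positivity
        calc ((N-1:ℕ):ℝ)^(s+γ) * ((N-1:ℕ):ℝ)^(-γ) / s
            ≤ ((N:ℝ)^2 * (s*ε/2)) * ((N-1:ℕ):ℝ)^(-γ) / s := by
              rw [div_eq_mul_inv, div_eq_mul_inv]
              exact mul_le_mul_of_nonneg_right
                (mul_le_mul_of_nonneg_right h1 hA.le) (inv_nonneg.mpr hs0.le)
        _ = (N:ℝ) * ((ε*N/2) * ((N-1:ℕ):ℝ)^(-γ)) := by field_simp
        _ ≤ (N:ℝ) * ((m:ℝ) * ((N-1:ℕ):ℝ)^(-γ)) := by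
              apply mul_le_mul_of_nonneg_left ?_ hNpos.le
              exact mul_le_mul_of_nonneg_right hm_half hA.le
      calc Hgen (N-1) γ ≤ ((N-1:ℕ):ℝ)^s / s := htot
      _ ≤ (N:ℝ) * ((m:ℝ) * ((N-1:ℕ):ℝ)^(-γ)) := hfinal
      _ ≤ (N:ℝ) * ∑ k ∈ Finset.Icc x (N-1), (k:ℝ)^(-γ) := by
          apply mul_le_mul_of_nonneg_left htail hNpos.le
    · -- case γ < 0
      have hγ' : (0:ℝ) ≤ -γ := by linarith
      have hxposR : (0:ℝ) < (x:ℝ) := by linarith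
      have htot : Hgen (N-1) γ ≤ ((N-1:ℕ):ℝ) * ((N-1:ℕ):ℝ)^(-γ) := by
        have := Finset.sum_le_card_nsmul (Finset.Icc 1 (N-1))
          (fun k => (k:ℝ)^(-γ)) (((N-1:ℕ):ℝ)^(-γ)) ?_
        · rw [Nat.card_Icc, nsmul_eq_mul] at this
          have hc : ((N - 1 + 1 - 1 : ℕ):ℝ) = ((N-1:ℕ):ℝ) := by norm_num
          calc Hgen (N-1) γ ≤ ((N-1+1-1:ℕ):ℝ) * ((N-1:ℕ):ℝ)^(-γ) := this
          _ = ((N-1:ℕ):ℝ) * ((N-1:ℕ):ℝ)^(-γ) := by rw [hc]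
        · intro k hk
          rcases Finset.mem_Icc.mp hk with ⟨hk1, hk2⟩
          exact Real.rpow_le_rpow (Nat.cast_nonneg k) (by exact_mod_cast hk2) hγ'
      have htail : (m:ℝ) * ((x:ℕ):ℝ)^(-γ) ≤ ∑ k ∈ Finset.Icc x (N-1), (k:ℝ)^(-γ) := by
        have := Finset.card_nsmul_le_sum (Finset.Icc x (N-1))
          (fun k => (k:ℝ)^(-γ)) (((x:ℕ):ℝ)^(-γ)) ?_
        · rwa [hcard, nsmul_eq_mul] at this
        · intro k hk
          rcases Finset.mem_Icc.mp hk with ⟨hk1, hk2⟩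
          exact Real.rpow_le_rpow hxposR.le (by exact_mod_cast hk1) hγ'
      have hn2x : ((N-1:ℕ):ℝ) ≤ 2 * (x:ℝ) := by rw [hnR]; linarith
      have hstep : ((N-1:ℕ):ℝ)^(-γ) ≤ (2:ℝ)^(-γ) * (x:ℝ)^(-γ) := by
        calc ((N-1:ℕ):ℝ)^(-γ) ≤ (2*(x:ℝ))^(-γ) :=
          Real.rpow_le_rpow hn_posR.le hn2x hγ'
        _ = (2:ℝ)^(-γ) * (x:ℝ)^(-γ) := Real.mul_rpow (by norm_num) hxposR.le
      have hxpow_pos : (0:ℝ) < (x:ℝ)^(-γ) := Real.rpow_pos_of_pos hxposR _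
      have h2γm : (2:ℝ)^(-γ) ≤ (m:ℝ) := le_trans hN3 (by linarith)
      have hfinal : ((N-1:ℕ):ℝ) * ((N-1:ℕ):ℝ)^(-γ) ≤ (N:ℝ) * ((m:ℝ) * (x:ℝ)^(-γ)) := by
        calc ((N-1:ℕ):ℝ) * ((N-1:ℕ):ℝ)^(-γ)
            ≤ (N:ℝ) * ((2:ℝ)^(-γ) * (x:ℝ)^(-γ)) := by
              apply mul_le_mul (by rw [hnR]; linarith) hstep (by positivity) hNpos.le
        _ ≤ (N:ℝ) * ((m:ℝ) * (x:ℝ)^(-γ)) := by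
              apply mul_le_mul_of_nonneg_left ?_ hNpos.le
              exact mul_le_mul_of_nonneg_right h2γm hxpow_pos.le
      calc Hgen (N-1) γ ≤ ((N-1:ℕ):ℝ) * ((N-1:ℕ):ℝ)^(-γ) := htot
      _ ≤ (N:ℝ) * ((m:ℝ) * (x:ℝ)^(-γ)) := hfinal
      _ ≤ (N:ℝ) * ∑ k ∈ Finset.Icc x (N-1), (k:ℝ)^(-γ) := by
          apply mul_le_mul_of_nonneg_left htail hNpos.le
  -- conclude
  have hbdd : BddAbove {y : ℕ | 1 ≤ y ∧ y ≤ N - 1 ∧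
      Hgen (N - 1) γ ≤ (N : ℝ) * ∑ k ∈ Finset.Icc y (N - 1), (k : ℝ) ^ (-γ)} :=
    ⟨N - 1, fun y hy => hy.2.1⟩
  have hxmem : x ∈ {y : ℕ | 1 ≤ y ∧ y ≤ N - 1 ∧
      Hgen (N - 1) γ ≤ (N : ℝ) * ∑ k ∈ Finset.Icc y (N - 1), (k : ℝ) ^ (-γ)} :=
    ⟨hx1, hxle, hkey⟩
  have hle : x ≤ dhat N γ := le_csSup hbdd hxmem
  have : (x:ℝ) ≤ (dhat N γ : ℝ) := by exact_mod_cast hle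
  calc (1 - ε) * N = (N:ℝ) - ε * N := by ring
  _ ≤ (N:ℝ) - (m:ℝ) := by linarith
  _ = (x:ℝ) := hxR.symm
  _ ≤ (dhat N γ : ℝ) := this


/-- For `γ < 2`, `lim_{N→∞} d̂_N(γ) / N = 1`, i.e. the expected maximum degree of a
power-law degree sequence with exponent `γ < 2` grows linearly in `N`. -/
theorem expected_max_degree_linear (γ : ℝ) (hγ : γ < 2) :
    Tendsto (fun N : ℕ => (dhat N γ : ℝ) / N) atTop (nhds 1) := by
  rw [Metric.tendsto_atTop]
  intro ε hε
  set ε' := min (ε/2) (1/2) with hε'_def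
  have hε'0 : 0 < ε' := lt_min (by linarith) (by norm_num)
  have hε'2 : ε' ≤ 1/2 := min_le_right _ _
  have hε'ε : ε' < ε := lt_of_le_of_lt (min_le_left _ _) (by linarith)
  have h1 := dhat_lower γ hγ hε'0 hε'2
  rw [eventually_atTop] at h1
  obtain ⟨N₀, hN₀⟩ := h1
  refine ⟨max N₀ 1, fun N hN => ?_⟩
  have hNN₀ : N₀ ≤ N := le_trans (le_max_left _ _) hN
  have hN1 : 1 ≤ N := le_trans (le_max_right _ _) hN
  have hNpos : (0:ℝ) < N := by exact_mod_cast hN1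
  have hlow : (1 - ε') * N ≤ (dhat N γ : ℝ) := hN₀ N hNN₀
  have hup : (dhat N γ : ℝ) ≤ (N:ℝ) := by
    have h := dhat_le N γ
    have : dhat N γ ≤ N := le_trans h (Nat.sub_le _ _)
    exact_mod_cast this
  rw [Real.dist_eq, abs_sub_lt_iff]
  constructor
  · have : (dhat N γ : ℝ) / N ≤ 1 := by
      rw [div_le_one hNpos]; exact hup
    linarith
  · have : 1 - ε' ≤ (dhat N γ : ℝ) / N := by
      rw [le_div_iff₀ hNpos]; exact hlow
    linarith
end

section
/- Fix a real γ < 2. For integer N ≥ 2 define the expected second-largest degree d̂2_N(γ) = max{ x ∈ {1, …, N−1} : N · Σ_{k=x}^{N−1} k^{−γ} ≥ 2·H_{N−1,γ} } (this set is nonempty for all sufficiently large N). Then lim_{N→∞} d̂2_N(γ) / N = 1, i.e., the second-largest degree also grows linearly in N. -/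
open Filter

/-- The expected second-largest degree of a power-law degree sequence with exponent `γ` on
`N` nodes: `d̂2_N(γ) = max { x ∈ {1,…,N-1} : N · ∑_{k=x}^{N-1} k^{-γ} ≥ 2·H_{N-1,γ} }`. -/
noncomputable def dhat2 (N : ℕ) (γ : ℝ) : ℕ :=
  sSup {x : ℕ | 1 ≤ x ∧ x ≤ N - 1 ∧
    2 * Hgen (N - 1) γ ≤ (N : ℝ) * ∑ k ∈ Finset.Icc x (N - 1), (k : ℝ) ^ (-γ)}

lemma Hgen_nonneg (a : ℕ) (b : ℝ) : 0 ≤ Hgen a b :=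
  Finset.sum_nonneg fun t _ => Real.rpow_nonneg (Nat.cast_nonneg t) _

lemma Hgen_mono (b : ℝ) {a a' : ℕ} (h : a ≤ a') : Hgen a b ≤ Hgen a' b :=
  Finset.sum_le_sum_of_subset_of_nonneg (Finset.Icc_subset_Icc_right (by exact_mod_cast h))
    fun t _ _ => Real.rpow_nonneg (Nat.cast_nonneg t) _

lemma Hgen_le_of_le_one {γ : ℝ} (hγ : γ ≤ 1) (n : ℕ) :
    Hgen n γ ≤ (n : ℝ) ^ (1 - γ) * (1 + Real.log n) := by
  have hsum : ∑ t ∈ Finset.Icc 1 n, (t : ℝ)⁻¹ = (harmonic n : ℝ) := by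
    rw [harmonic_eq_sum_Icc]; push_cast; ring
  have h1 : Hgen n γ ≤ (n : ℝ) ^ (1 - γ) * ∑ t ∈ Finset.Icc 1 n, (t : ℝ)⁻¹ := by
    rw [Finset.mul_sum]
    refine Finset.sum_le_sum fun t ht => ?_
    have ht1 : 1 ≤ t := (Finset.mem_Icc.mp ht).1
    have htn : t ≤ n := (Finset.mem_Icc.mp ht).2
    have ht0 : (0 : ℝ) < t := by exact_mod_cast ht1
    have : (t : ℝ) ^ (-γ) = (t : ℝ) ^ (1 - γ) * (t : ℝ)⁻¹ := by
      rw [← Real.rpow_neg_one (t : ℝ), ← Real.rpow_add ht0]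
      ring_nf
    rw [this]
    refine mul_le_mul_of_nonneg_right ?_ (by positivity)
    exact Real.rpow_le_rpow ht0.le (by exact_mod_cast htn) (by linarith)
  refine h1.trans ?_
  rw [hsum]
  exact mul_le_mul_of_nonneg_left (harmonic_le_one_add_log n)
    (Real.rpow_nonneg (Nat.cast_nonneg n) _)

lemma Hgen_bounded {γ : ℝ} (h1 : 1 < γ) : ∃ C : ℝ, ∀ n, Hgen n γ ≤ C := by
  have hs : Summable (fun n : ℕ => (n : ℝ) ^ (-γ)) :=
    Real.summable_nat_rpow.2 (by linarith)
  exact ⟨∑' n : ℕ, (n : ℝ) ^ (-γ), fun n =>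
    hs.sum_le_tsum _ (fun t _ => Real.rpow_nonneg (Nat.cast_nonneg t) _)⟩

lemma keyK {γ : ℝ} (hγ : γ < 2) :
    Tendsto (fun N : ℕ => Hgen N γ / (N : ℝ) ^ (2 - γ)) atTop (nhds 0) := by
  have hcast : Tendsto (fun N : ℕ => (N : ℝ)) atTop atTop := tendsto_natCast_atTop_atTop
  rcases le_or_gt γ 1 with h1 | h1
  · have hlim : Tendsto (fun x : ℝ => (1 + Real.log x) / x) atTop (nhds 0) := by
      have hlog : Tendsto (fun x : ℝ => Real.log x / x) atTop (nhds 0) :=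
        Real.isLittleO_log_id_atTop.tendsto_div_nhds_zero
      have hone : Tendsto (fun x : ℝ => x⁻¹) atTop (nhds 0) := tendsto_inv_atTop_zero
      have := hone.add hlog
      simp only [add_zero] at this
      exact this.congr fun x => by rw [← one_div, ← add_div]
    refine squeeze_zero' ?_ ?_ (hlim.comp hcast)
    · filter_upwards with N
      exact div_nonneg (Hgen_nonneg N γ) (Real.rpow_nonneg (Nat.cast_nonneg N) _)
    · filter_upwards [eventually_ge_atTop 1] with N hN
      have hN0 : (0 : ℝ) < N := by exact_mod_cast hN
      have hp : (0 : ℝ) < (N : ℝ) ^ (2 - γ) := Real.rpow_pos_of_pos hN0 _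
      rw [div_le_iff₀ hp]
      refine (Hgen_le_of_le_one h1 N).trans_eq ?_
      have h2 : (N : ℝ) ^ (1 - γ) = (N : ℝ) ^ (2 - γ) / N := by
        rw [show (1 - γ) = (2 - γ) - 1 by ring, Real.rpow_sub hN0, Real.rpow_one]
      rw [h2]; simp only [Function.comp_apply]; 
      field_simp
  · obtain ⟨C, hC⟩ := Hgen_bounded h1
    have hlim : Tendsto (fun x : ℝ => C * x ^ (-(2 - γ))) atTop (nhds 0) := by
      have := (tendsto_rpow_neg_atTop (by linarith : (0:ℝ) < 2 - γ)).const_mul C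
      simpa using this
    refine squeeze_zero' ?_ ?_ (hlim.comp hcast)
    · filter_upwards with N
      exact div_nonneg (Hgen_nonneg N γ) (Real.rpow_nonneg (Nat.cast_nonneg N) _)
    · filter_upwards [eventually_ge_atTop 1] with N hN
      have hN0 : (0 : ℝ) < N := by exact_mod_cast hN
      have hp : (0 : ℝ) < (N : ℝ) ^ (2 - γ) := Real.rpow_pos_of_pos hN0 _
      rw [div_le_iff₀ hp]
      have : (N : ℝ) ^ (-(2 - γ)) * (N : ℝ) ^ (2 - γ) = 1 := by
        rw [← Real.rpow_add hN0]; simp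
      calc Hgen N γ ≤ C := hC N
        _ = C * ((N:ℝ) ^ (-(2-γ)) * (N:ℝ) ^ (2-γ)) := by rw [this, mul_one]
        _ = C * (N:ℝ) ^ (-(2-γ)) * (N:ℝ) ^ (2-γ) := by ring

lemma mem_eventually {γ ε : ℝ} (hγ : γ < 2) (hε : 0 < ε) (hε2 : ε < 1/2) :
    ∀ᶠ N : ℕ in atTop, (N - 1 - ⌊ε * N⌋₊) ∈ {x : ℕ | 1 ≤ x ∧ x ≤ N - 1 ∧
      2 * Hgen (N - 1) γ ≤ (N : ℝ) * ∑ k ∈ Finset.Icc x (N - 1), (k : ℝ) ^ (-γ)} := by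
  set c : ℝ := min ((2:ℝ) ^ γ) 1 with hc
  have hcpos : 0 < c := lt_min (Real.rpow_pos_of_pos two_pos γ) one_pos
  have hεc : 0 < ε * c / 2 := by positivity
  have hev1 : ∀ᶠ N : ℕ in atTop, (2:ℝ) ≤ (N : ℝ) * (1/2 - ε) := by
    have : Tendsto (fun N : ℕ => (N : ℝ) * (1/2 - ε)) atTop atTop :=
      tendsto_natCast_atTop_atTop.atTop_mul_const (by linarith)
    exact this.eventually_ge_atTop 2
  have hev2 : ∀ᶠ N : ℕ in atTop, Hgen N γ / (N : ℝ) ^ (2 - γ) < ε * c / 2 :=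
    (keyK hγ).eventually (gt_mem_nhds hεc)
  filter_upwards [hev1, hev2, eventually_ge_atTop 4] with N h1 h2 h4
  set k : ℕ := ⌊ε * N⌋₊ with hk
  have hN4 : (4:ℝ) ≤ N := by exact_mod_cast h4
  have hN0 : (0 : ℝ) < N := by linarith
  have hkle : (k:ℝ) ≤ ε * N := Nat.floor_le (by positivity)
  have hkb : (k:ℝ) ≤ (N:ℝ)/2 - 2 := by nlinarith
  have hkN : k ≤ N - 2 := by
    have h' : (k:ℝ) ≤ ((N-2:ℕ):ℝ) := by
      rw [Nat.cast_sub (by omega)]; push_cast; linarith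
    exact_mod_cast h'
  set x : ℕ := N - 1 - k with hxdef
  have hx1 : 1 ≤ x := by omega
  have hxN : x ≤ N - 1 := by omega
  have hxcast : (x:ℝ) = (N:ℝ) - 1 - k := by
    rw [hxdef, Nat.cast_sub (by omega), Nat.cast_sub (by omega), Nat.cast_one]
  have hxhalf : (N:ℝ)/2 ≤ (x:ℝ) := by rw [hxcast]; linarith
  have hrnn : (0:ℝ) ≤ (N:ℝ)^(-γ) := Real.rpow_nonneg hN0.le _
  have hterm : ∀ j ∈ Finset.Icc x (N-1), c * (N:ℝ)^(-γ) ≤ (j:ℝ)^(-γ) := by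
    intro j hj
    obtain ⟨hj1, hj2⟩ := Finset.mem_Icc.mp hj
    have hj1' : (x:ℝ) ≤ j := by exact_mod_cast hj1
    have hjlo : (N:ℝ)/2 ≤ (j:ℝ) := hxhalf.trans hj1'
    have hjhi : (j:ℝ) ≤ N := by
      have : j ≤ N := by omega
      exact_mod_cast this
    have hj0 : (0:ℝ) < j := by linarith
    rcases le_or_gt γ 0 with hs | hs
    · have hmono : ((N:ℝ)/2)^(-γ) ≤ (j:ℝ)^(-γ) :=
        Real.rpow_le_rpow (by linarith) hjlo (by linarith)
      have heq : ((N:ℝ)/2)^(-γ) = (N:ℝ)^(-γ) * 2^γ := by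
        rw [Real.div_rpow hN0.le (by norm_num : (0:ℝ) ≤ 2),
          Real.rpow_neg (by norm_num : (0:ℝ) ≤ 2)]
        field_simp
      calc c * (N:ℝ)^(-γ) ≤ 2^γ * (N:ℝ)^(-γ) :=
            mul_le_mul_of_nonneg_right (min_le_left _ _) hrnn
        _ = ((N:ℝ)/2)^(-γ) := by rw [heq]; ring
        _ ≤ (j:ℝ)^(-γ) := hmono
    · have hmono : (N:ℝ)^(-γ) ≤ (j:ℝ)^(-γ) :=
        Real.rpow_le_rpow_of_nonpos hj0 hjhi (by linarith)
      calc c * (N:ℝ)^(-γ) ≤ 1 * (N:ℝ)^(-γ) :=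
            mul_le_mul_of_nonneg_right (min_le_right _ _) hrnn
        _ = (N:ℝ)^(-γ) := one_mul _
        _ ≤ (j:ℝ)^(-γ) := hmono
  have hcard : (Finset.Icc x (N-1)).card = k + 1 := by
    rw [Nat.card_Icc]; omega
  have hsum : ((k:ℝ)+1) * (c * (N:ℝ)^(-γ)) ≤ ∑ j ∈ Finset.Icc x (N-1), (j:ℝ)^(-γ) := by
    have := Finset.card_nsmul_le_sum (Finset.Icc x (N-1)) _ _ hterm
    rwa [hcard, nsmul_eq_mul, Nat.cast_add, Nat.cast_one] at this
  have hfloor : ε * N < (k:ℝ) + 1 := Nat.lt_floor_add_one _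
  have hNpow : (N:ℝ)^(2-γ) = N * (N * (N:ℝ)^(-γ)) := by
    rw [show (2-γ) = 1 + (1 + -γ) by ring, Real.rpow_add hN0, Real.rpow_add hN0, Real.rpow_one]
  have hH : 2 * Hgen (N-1) γ ≤ ε * c * (N:ℝ)^(2-γ) := by
    have h2' := (div_lt_iff₀ (Real.rpow_pos_of_pos hN0 (2-γ))).1 h2
    have hm := Hgen_mono γ (Nat.sub_le N 1)
    linarith
  refine ⟨hx1, hxN, ?_⟩
  calc 2 * Hgen (N-1) γ ≤ ε * c * (N:ℝ)^(2-γ) := hH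
    _ = (N:ℝ) * ((ε*N) * (c * (N:ℝ)^(-γ))) := by rw [hNpow]; ring
    _ ≤ (N:ℝ) * (((k:ℝ)+1) * (c*(N:ℝ)^(-γ))) := by
        refine mul_le_mul_of_nonneg_left
          (mul_le_mul_of_nonneg_right hfloor.le (by positivity)) hN0.le
    _ ≤ (N:ℝ) * ∑ j ∈ Finset.Icc x (N-1), (j:ℝ)^(-γ) :=
        mul_le_mul_of_nonneg_left hsum hN0.le

/-- For `γ < 2`, the defining set of `d̂2_N(γ)` is nonempty for all sufficiently large `N`,
and `lim_{N→∞} d̂2_N(γ) / N = 1`: the second-largest degree also grows linearly in `N`. -/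
theorem expected_second_max_degree_linear (γ : ℝ) (hγ : γ < 2) :
    (∀ᶠ N : ℕ in atTop,
      {x : ℕ | 1 ≤ x ∧ x ≤ N - 1 ∧
        2 * Hgen (N - 1) γ ≤ (N : ℝ) * ∑ k ∈ Finset.Icc x (N - 1), (k : ℝ) ^ (-γ)}.Nonempty) ∧
    Tendsto (fun N : ℕ => (dhat2 N γ : ℝ) / N) atTop (nhds 1) := by
  have hne : ∀ᶠ N : ℕ in atTop,
      {x : ℕ | 1 ≤ x ∧ x ≤ N - 1 ∧
        2 * Hgen (N - 1) γ ≤ (N : ℝ) * ∑ k ∈ Finset.Icc x (N - 1), (k : ℝ) ^ (-γ)}.Nonempty :=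
    (mem_eventually hγ (by norm_num : (0:ℝ) < 1/4) (by norm_num)).mono fun N h => ⟨_, h⟩
  refine ⟨hne, tendsto_order.2 ⟨?_, ?_⟩⟩
  · -- lower bound
    intro a ha
    set ε : ℝ := min (1 - a) 1 / 4 with hεdef
    have hε : 0 < ε := by
      have : (0:ℝ) < min (1 - a) 1 := lt_min (by linarith) one_pos
      positivity
    have hε2 : ε < 1/2 := by
      have : min (1 - a) 1 ≤ 1 := min_le_right _ _
      rw [hεdef]; linarith
    have hεa : ε ≤ (1 - a) / 4 := by
      have : min (1 - a) 1 ≤ 1 - a := min_le_left _ _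
      rw [hεdef]; linarith
    have hpos : (0:ℝ) < 3 * (1 - a) / 4 := by linarith
    have hsmall : ∀ᶠ N : ℕ in atTop, (1:ℝ) / N < 3 * (1 - a) / 4 :=
      tendsto_one_div_atTop_nhds_zero_nat.eventually (gt_mem_nhds hpos)
    filter_upwards [mem_eventually hγ hε hε2, hsmall, eventually_ge_atTop 2] with N hmem hN1 hN2
    set k : ℕ := ⌊ε * N⌋₊ with hk
    set x : ℕ := N - 1 - k with hxdef
    have hN0 : (0:ℝ) < N := by
      have : (2:ℝ) ≤ N := by exact_mod_cast hN2
      linarith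
    have hkle : (k:ℝ) ≤ ε * N := Nat.floor_le (by positivity)
    have hkN : k + 2 ≤ N := by
      have := hmem.1
      omega
    have hxcast : (x:ℝ) = (N:ℝ) - 1 - k := by
      rw [hxdef, Nat.cast_sub (by omega), Nat.cast_sub (by omega), Nat.cast_one]
    have hbdd : BddAbove {x : ℕ | 1 ≤ x ∧ x ≤ N - 1 ∧
        2 * Hgen (N - 1) γ ≤ (N : ℝ) * ∑ k ∈ Finset.Icc x (N - 1), (k : ℝ) ^ (-γ)} :=
      ⟨N - 1, fun y hy => hy.2.1⟩
    have hle : x ≤ dhat2 N γ := le_csSup hbdd hmem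
    have hle' : (x:ℝ) ≤ dhat2 N γ := by exact_mod_cast hle
    rw [lt_div_iff₀ hN0]
    have h1N : (1:ℝ)/N < 3 * (1 - a) / 4 := hN1
    have hmul : 1 < 3 * (1 - a) / 4 * N := by
      rw [div_lt_iff₀ hN0] at h1N; linarith
    have hεN : ε * N ≤ (1 - a) / 4 * N := mul_le_mul_of_nonneg_right hεa hN0.le
    have : a * N < (N:ℝ) - 1 - ε * N := by nlinarith
    calc a * N < (N:ℝ) - 1 - ε * N := this
      _ ≤ (x:ℝ) := by rw [hxcast]; linarith
      _ ≤ dhat2 N γ := hle'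
  · -- upper bound
    intro a ha
    filter_upwards [hne, eventually_ge_atTop 1] with N hN hN1
    have hN0 : (0:ℝ) < N := by
      have : (1:ℝ) ≤ N := by exact_mod_cast hN1
      linarith
    have hd : dhat2 N γ ≤ N - 1 := csSup_le hN fun y hy => hy.2.1
    have hd' : (dhat2 N γ : ℝ) ≤ ((N - 1 : ℕ) : ℝ) := by exact_mod_cast hd
    have hcast : ((N - 1 : ℕ) : ℝ) = (N:ℝ) - 1 := by
      rw [Nat.cast_sub hN1, Nat.cast_one]
    rw [div_lt_iff₀ hN0]
    have : (dhat2 N γ : ℝ) ≤ (N:ℝ) - 1 := by rw [← hcast]; exact hd'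
    nlinarith
end

section
/- Fix a real γ with 0 < γ < 1. For integer N ≥ 2 let S_N = (s_0, …, s_{N−1}) be the degree-maximizing sequence with exponent γ, and let A_N = #{ i ∈ {0, …, N−1} : s_i = 1 }. Then lim_{N→∞} A_N / N^{γ} = 1 − γ; in particular A_N → ∞ but A_N/N → 0. -/
open Filter

/-- The degree-maximizing sequence with exponent `γ` on `N` nodes:
`s_i = max { s ∈ {1,…,N-1} : N · ∑_{d=s}^{N-1} d^{-γ} ≥ (i+1) · H_{N-1,γ} }`. -/
noncomputable def seqS (N : ℕ) (γ : ℝ) (i : ℕ) : ℕ :=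
  sSup {s : ℕ | 1 ≤ s ∧ s ≤ N - 1 ∧
    ((i : ℝ) + 1) * Hgen (N - 1) γ ≤ (N : ℝ) * ∑ d ∈ Finset.Icc s (N - 1), (d : ℝ) ^ (-γ)}

/-- The number of entries `s_i` (for `i ∈ {0,…,N-1}`) of the degree-maximizing sequence
that are equal to `1`. -/
noncomputable def Acount (N : ℕ) (γ : ℝ) : ℕ :=
  {i : ℕ | i < N ∧ seqS N γ i = 1}.ncard

lemma hgen_ge_one (γ : ℝ) {n : ℕ} (hn : 1 ≤ n) : 1 ≤ Hgen n γ := by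
  have h1 : (1:ℕ) ∈ Finset.Icc 1 n := by simp [hn]
  have := Finset.single_le_sum (f := fun t : ℕ => (t:ℝ)^(-γ))
    (fun i _ => Real.rpow_nonneg (Nat.cast_nonneg i) _) h1
  simpa [Hgen] using this

lemma hgen_split (γ : ℝ) {n : ℕ} (hn : 1 ≤ n) :
    Hgen n γ = 1 + ∑ d ∈ Finset.Icc 2 n, (d:ℝ)^(-γ) := by
  have h1 : (1:ℕ) ∈ Finset.Icc 1 n := by simp [hn]
  rw [Hgen, ← Finset.add_sum_erase _ _ h1]
  congr 1
  · simp
  · congr 1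
    rw [Finset.Icc_erase_left]
    exact (Finset.Icc_succ_left_eq_Ioc 1 n).symm

lemma seqS_eq_one_iff (γ : ℝ) {N i : ℕ} (hN : 2 ≤ N) (hi : i < N) :
    seqS N γ i = 1 ↔
      (N:ℝ) * (Hgen (N-1) γ - 1) < ((i:ℝ) + 1) * Hgen (N-1) γ := by
  have hn1 : 1 ≤ N - 1 := by omega
  have hH : 1 ≤ Hgen (N-1) γ := hgen_ge_one γ hn1
  have hsum : ∑ d ∈ Finset.Icc 2 (N-1), (d:ℝ)^(-γ) = Hgen (N-1) γ - 1 := by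
    have := hgen_split γ hn1; linarith
  set T : Set ℕ := {s : ℕ | 1 ≤ s ∧ s ≤ N - 1 ∧
    ((i : ℝ) + 1) * Hgen (N - 1) γ ≤ (N : ℝ) * ∑ d ∈ Finset.Icc s (N - 1), (d : ℝ) ^ (-γ)}
    with hT
  have hbdd : BddAbove T := ⟨N - 1, fun s hs => hs.2.1⟩
  have h1T : 1 ∈ T := by
    refine ⟨le_refl 1, hn1, ?_⟩
    have : ((i:ℝ) + 1) ≤ (N:ℝ) := by exact_mod_cast hi
    calc ((i:ℝ) + 1) * Hgen (N-1) γ ≤ (N:ℝ) * Hgen (N-1) γ :=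
          mul_le_mul_of_nonneg_right this (by linarith)
      _ = (N:ℝ) * ∑ d ∈ Finset.Icc 1 (N - 1), (d : ℝ) ^ (-γ) := rfl
  constructor
  · intro hone
    by_contra hc
    push_neg at hc
    have hge1 : (1:ℝ) ≤ ((i:ℝ)+1) * Hgen (N-1) γ := by
      nlinarith [Nat.cast_nonneg (α := ℝ) i]
    have h2n : 2 ≤ N - 1 := by
      by_contra h2n
      have : N - 1 < 2 := by omega
      have hempty : Finset.Icc 2 (N-1) = ∅ := by
        apply Finset.Icc_eq_empty; omega
      rw [hempty, Finset.sum_empty] at hsum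
      nlinarith
    have h2T : 2 ∈ T := by
      refine ⟨one_le_two, h2n, ?_⟩
      rw [hsum]; exact hc
    have h2s : 2 ≤ sSup T := le_csSup hbdd h2T
    have hone' : sSup T = 1 := hone
    omega
  · intro hlt
    have hTsub : T = {1} := by
      ext s
      simp only [Set.mem_singleton_iff]
      constructor
      · rintro ⟨hs1, hsN, hineq⟩
        by_contra hne
        have hs2 : 2 ≤ s := by omega
        have hsub : Finset.Icc s (N-1) ⊆ Finset.Icc 2 (N-1) :=
          Finset.Icc_subset_Icc_left hs2
        have hle : ∑ d ∈ Finset.Icc s (N-1), (d:ℝ)^(-γ) ≤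
            ∑ d ∈ Finset.Icc 2 (N-1), (d:ℝ)^(-γ) :=
          Finset.sum_le_sum_of_subset_of_nonneg hsub
            (fun j _ _ => Real.rpow_nonneg (Nat.cast_nonneg j) _)
        rw [hsum] at hle
        have hN0 : (0:ℝ) ≤ (N:ℝ) := Nat.cast_nonneg N
        nlinarith
      · rintro rfl; exact h1T
    rw [seqS, ← hT, hTsub]
    exact csSup_singleton 1

lemma acount_eq (γ : ℝ) {N : ℕ} (hN : 2 ≤ N) :
    Acount N γ = N - ⌊(N:ℝ) * (Hgen (N-1) γ - 1) / Hgen (N-1) γ⌋₊ := by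
  have hH : 1 ≤ Hgen (N-1) γ := hgen_ge_one γ (by omega)
  have hHpos : 0 < Hgen (N-1) γ := by linarith
  set x : ℝ := (N:ℝ) * (Hgen (N-1) γ - 1) / Hgen (N-1) γ with hx
  have hx0 : 0 ≤ x := by
    apply div_nonneg _ (le_of_lt hHpos)
    have : (0:ℝ) ≤ (N:ℝ) := Nat.cast_nonneg N
    nlinarith
  set m : ℕ := ⌊x⌋₊ with hm
  have hkey : ∀ i : ℕ, i < N → (seqS N γ i = 1 ↔ m ≤ i) := by
    intro i hi
    rw [seqS_eq_one_iff γ hN hi]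
    rw [show ((N:ℝ) * (Hgen (N-1) γ - 1) < ((i:ℝ) + 1) * Hgen (N-1) γ) ↔ x < (i:ℝ)+1 from
      (div_lt_iff₀ hHpos).symm]
    rw [show ((i:ℝ) + 1) = ((i+1 : ℕ) : ℝ) by push_cast; ring]
    rw [← Nat.floor_lt hx0, ← hm]
    omega
  have hset : {i : ℕ | i < N ∧ seqS N γ i = 1} = ↑(Finset.Ico m N) := by
    ext i
    simp only [Set.mem_setOf_eq, Finset.coe_Ico, Set.mem_Ico]
    constructor
    · rintro ⟨hi, hs⟩; exact ⟨(hkey i hi).mp hs, hi⟩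
    · rintro ⟨h1, h2⟩; exact ⟨h2, (hkey i h2).mpr h1⟩
  rw [Acount, hset, Set.ncard_coe_finset, Nat.card_Ico]

lemma acount_bounds (γ : ℝ) {N : ℕ} (hN : 2 ≤ N) :
    (N:ℝ) / Hgen (N-1) γ ≤ (Acount N γ : ℝ) ∧
    (Acount N γ : ℝ) ≤ (N:ℝ) / Hgen (N-1) γ + 1 := by
  have hH : 1 ≤ Hgen (N-1) γ := hgen_ge_one γ (by omega)
  have hHpos : 0 < Hgen (N-1) γ := by linarith
  set H := Hgen (N-1) γ
  set x : ℝ := (N:ℝ) * (H - 1) / H with hx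
  have hx0 : 0 ≤ x := by
    apply div_nonneg _ (le_of_lt hHpos)
    have : (0:ℝ) ≤ (N:ℝ) := Nat.cast_nonneg N
    nlinarith
  have hxN : x < N := by
    rw [hx, div_lt_iff₀ hHpos]
    have hN0 : (0:ℝ) < (N:ℝ) := by exact_mod_cast (by omega : 0 < N)
    nlinarith
  have hmN : ⌊x⌋₊ < N := (Nat.floor_lt hx0).mpr hxN
  have hA : Acount N γ = N - ⌊x⌋₊ := acount_eq γ hN
  have hcast : (Acount N γ : ℝ) = (N:ℝ) - (⌊x⌋₊ : ℝ) := by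
    rw [hA]; push_cast [Nat.cast_sub (le_of_lt hmN)]; ring
  have hfl : (⌊x⌋₊ : ℝ) ≤ x := Nat.floor_le hx0
  have hfu : x < (⌊x⌋₊ : ℝ) + 1 := Nat.lt_floor_add_one x
  have hNx : (N:ℝ) - x = (N:ℝ) / H := by
    rw [hx, eq_div_iff hHpos.ne', sub_mul, div_mul_cancel₀ _ hHpos.ne']
    ring
  constructor
  · rw [hcast, ← hNx]; linarith
  · rw [hcast, ← hNx]; linarith

lemma rpow_anti (γ : ℝ) (h0 : 0 ≤ γ) {a b : ℝ} (ha : 1 ≤ a) :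
    AntitoneOn (fun x : ℝ => x ^ (-γ)) (Set.Icc a b) := by
  intro x hx y hy hxy
  exact Real.rpow_le_rpow_of_nonpos (lt_of_lt_of_le one_pos (ha.trans hx.1)) hxy (by linarith)

lemma integral_eval (γ : ℝ) (h1 : γ < 1) {b : ℝ} :
    ∫ x in (1:ℝ)..b, x ^ (-γ) = (b ^ (1-γ) - 1) / (1-γ) := by
  rw [integral_rpow (Or.inl (by linarith))]
  rw [Real.one_rpow]
  ring_nf

lemma hgen_lower (γ : ℝ) (h0 : 0 < γ) (h1 : γ < 1) (n : ℕ) :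
    (((n:ℝ)+1) ^ (1-γ) - 1) / (1-γ) ≤ Hgen n γ := by
  have hab : (1:ℕ) ≤ n + 1 := by omega
  have hanti := rpow_anti γ h0.le (a := ((1:ℕ):ℝ)) (b := ((n+1:ℕ):ℝ)) (by norm_num)
  have := hanti.integral_le_sum_Ico hab
  rw [show ((1:ℕ):ℝ) = (1:ℝ) by norm_num] at this
  rw [integral_eval γ h1] at this
  have hIco : Finset.Ico 1 (n+1) = Finset.Icc 1 n := Finset.Ico_add_one_right_eq_Icc 1 n
  rw [hIco] at this
  rw [show ((n+1:ℕ):ℝ) = (n:ℝ)+1 by push_cast; ring] at this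
  exact le_trans this (le_of_eq rfl)

lemma hgen_upper (γ : ℝ) (h0 : 0 < γ) (h1 : γ < 1) {n : ℕ} (hn : 1 ≤ n) :
    Hgen n γ ≤ 1 + ((n:ℝ) ^ (1-γ) - 1) / (1-γ) := by
  have hanti := rpow_anti γ h0.le (a := ((1:ℕ):ℝ)) (b := ((n:ℕ):ℝ)) (by norm_num)
  have hint := hanti.sum_le_integral_Ico hn
  rw [show ((1:ℕ):ℝ) = (1:ℝ) by norm_num] at hint
  rw [integral_eval γ h1] at hint
  have hre : ∑ i ∈ Finset.Ico 1 n, ((i+1:ℕ):ℝ) ^ (-γ)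
      = ∑ d ∈ Finset.Icc 2 n, (d:ℝ)^(-γ) := by
    rw [Finset.sum_Ico_add' (fun i : ℕ => (i:ℝ)^(-γ)) 1 n 1]
    congr 1
  rw [hre] at hint
  rw [hgen_split γ hn]
  linarith

lemma tendsto_hgen (γ : ℝ) (h0 : 0 < γ) (h1 : γ < 1) :
    Tendsto (fun n : ℕ => Hgen n γ / (n:ℝ)^(1-γ)) atTop (nhds (1/(1-γ))) := by
  have hc : (0:ℝ) < 1 - γ := by linarith
  have hu : Tendsto (fun n : ℕ => (n:ℝ)^(1-γ)) atTop atTop :=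
    (tendsto_rpow_atTop hc).comp tendsto_natCast_atTop_atTop
  have hB : Tendsto (fun n : ℕ => ((n:ℝ)^(1-γ))⁻¹) atTop (nhds 0) :=
    hu.inv_tendsto_atTop
  have hq : Tendsto (fun n : ℕ => ((n:ℝ)+1)/(n:ℝ)) atTop (nhds 1) := by
    have h' : Tendsto (fun n : ℕ => 1 + ((n:ℝ))⁻¹) atTop (nhds 1) := by
      have := (tendsto_inv_atTop_zero (𝕜 := ℝ)).comp tendsto_natCast_atTop_atTop
      simpa using (tendsto_const_nhds (x := (1:ℝ)) (f := atTop)).add this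
    apply h'.congr'
    filter_upwards [eventually_ge_atTop 1] with n hn
    have : (n:ℝ) ≠ 0 := by positivity
    field_simp
  have hcont : ContinuousAt (fun x : ℝ => x ^ (1-γ)) 1 :=
    Real.continuousAt_rpow_const 1 (1-γ) (Or.inl one_ne_zero)
  have hA : Tendsto (fun n : ℕ => ((n:ℝ)+1)^(1-γ) / (n:ℝ)^(1-γ)) atTop (nhds 1) := by
    have := (hcont.tendsto.comp hq)
    rw [Real.one_rpow] at this
    apply this.congr'
    filter_upwards [eventually_ge_atTop 1] with n hn
    have hn0 : (0:ℝ) ≤ (n:ℝ) := Nat.cast_nonneg n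
    simp only [Function.comp_apply]
    rw [Real.div_rpow (by linarith) hn0]
  have hlow : Tendsto (fun n : ℕ => ((((n:ℝ)+1) ^ (1-γ) - 1) / (1-γ)) / (n:ℝ)^(1-γ))
      atTop (nhds (1/(1-γ))) := by
    have := (hA.sub hB).div_const (1-γ)
    rw [show ((1:ℝ) - 0)/(1-γ) = 1/(1-γ) by ring] at this
    apply this.congr
    intro n
    ring
  have hupp : Tendsto (fun n : ℕ => (1 + ((n:ℝ) ^ (1-γ) - 1) / (1-γ)) / (n:ℝ)^(1-γ))
      atTop (nhds (1/(1-γ))) := by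
    have h2 : Tendsto (fun n : ℕ => ((n:ℝ)^(1-γ))⁻¹ + (1 - ((n:ℝ)^(1-γ))⁻¹)/(1-γ))
        atTop (nhds (0 + (1 - 0)/(1-γ))) :=
      hB.add (((tendsto_const_nhds (x := (1:ℝ)) (f := atTop)).sub hB).div_const (1-γ))
    rw [show (0:ℝ) + (1 - 0)/(1-γ) = 1/(1-γ) by ring] at h2
    apply h2.congr'
    filter_upwards [eventually_ge_atTop 1] with n hn
    have hn0 : (0:ℝ) < (n:ℝ)^(1-γ) := by
      apply Real.rpow_pos_of_pos
      exact_mod_cast Nat.lt_of_lt_of_le Nat.zero_lt_one hn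
    rw [eq_div_iff hn0.ne', add_mul, inv_mul_cancel₀ hn0.ne', div_mul_eq_mul_div, sub_mul,
      one_mul, inv_mul_cancel₀ hn0.ne']
  apply tendsto_of_tendsto_of_tendsto_of_le_of_le' hlow hupp
  · filter_upwards [eventually_ge_atTop 1] with n hn
    have hn0 : (0:ℝ) < (n:ℝ)^(1-γ) := by
      apply Real.rpow_pos_of_pos
      exact_mod_cast Nat.lt_of_lt_of_le Nat.zero_lt_one hn
    exact div_le_div_of_nonneg_right (hgen_lower γ h0 h1 n) hn0.le
  · filter_upwards [eventually_ge_atTop 1] with n hn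
    have hn0 : (0:ℝ) < (n:ℝ)^(1-γ) := by
      apply Real.rpow_pos_of_pos
      exact_mod_cast Nat.lt_of_lt_of_le Nat.zero_lt_one hn
    exact div_le_div_of_nonneg_right (hgen_upper γ h0 h1 hn) hn0.le

lemma tendsto_ratio (γ : ℝ) (h0 : 0 < γ) (h1 : γ < 1) :
    Tendsto (fun N : ℕ => (N:ℝ)^(1-γ) / Hgen (N-1) γ) atTop (nhds (1-γ)) := by
  have hc : (0:ℝ) < 1 - γ := by linarith
  have hA : Tendsto (fun N : ℕ => Hgen (N-1) γ / ((N-1:ℕ):ℝ)^(1-γ)) atTop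
      (nhds (1/(1-γ))) := (tendsto_hgen γ h0 h1).comp (tendsto_sub_atTop_nat 1)
  have hq : Tendsto (fun N : ℕ => ((N-1:ℕ):ℝ)/(N:ℝ)) atTop (nhds 1) := by
    have h' : Tendsto (fun N : ℕ => 1 - ((N:ℝ))⁻¹) atTop (nhds 1) := by
      have := (tendsto_inv_atTop_zero (𝕜 := ℝ)).comp tendsto_natCast_atTop_atTop
      simpa using (tendsto_const_nhds (x := (1:ℝ)) (f := atTop)).sub this
    apply h'.congr'
    filter_upwards [eventually_ge_atTop 1] with N hN
    have hN0 : (N:ℝ) ≠ 0 := by positivity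
    rw [Nat.cast_sub hN]
    push_cast
    field_simp
  have hcont : ContinuousAt (fun x : ℝ => x ^ (1-γ)) 1 :=
    Real.continuousAt_rpow_const 1 (1-γ) (Or.inl one_ne_zero)
  have hB : Tendsto (fun N : ℕ => ((N-1:ℕ):ℝ)^(1-γ) / (N:ℝ)^(1-γ)) atTop (nhds 1) := by
    have := hcont.tendsto.comp hq
    rw [Real.one_rpow] at this
    apply this.congr'
    filter_upwards [eventually_ge_atTop 1] with N hN
    simp only [Function.comp_apply]
    rw [Real.div_rpow (Nat.cast_nonneg _) (Nat.cast_nonneg _)]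
  have hprod := hA.mul hB
  rw [show (1/(1-γ)) * 1 = 1/(1-γ) by ring] at hprod
  have hmain : Tendsto (fun N : ℕ => Hgen (N-1) γ / (N:ℝ)^(1-γ)) atTop (nhds (1/(1-γ))) := by
    apply hprod.congr'
    filter_upwards [eventually_ge_atTop 2] with N hN
    have h1N : ((N-1:ℕ):ℝ) ≠ 0 := by
      have : 1 ≤ N - 1 := by omega
      positivity
    have hp : ((N-1:ℕ):ℝ)^(1-γ) ≠ 0 := by
      apply ne_of_gt (Real.rpow_pos_of_pos _ _)
      positivity
    rw [div_mul_div_comm, mul_comm (Hgen (N-1) γ), mul_div_mul_left _ _ hp]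
  have hinv := hmain.inv₀ (by positivity)
  rw [show (1/(1-γ))⁻¹ = 1-γ by rw [one_div, inv_inv]] at hinv
  apply hinv.congr
  intro N
  rw [inv_div]

/-- For `0 < γ < 1`, `lim_{N→∞} A_N / N^γ = 1 - γ`; in particular `A_N → ∞` but
`A_N / N → 0`. -/
theorem unit_degree_count_gamma_between_zero_one (γ : ℝ) (h0 : 0 < γ) (h1 : γ < 1) :
    Tendsto (fun N : ℕ => (Acount N γ : ℝ) / (N : ℝ) ^ γ) atTop (nhds (1 - γ)) ∧
    Tendsto (fun N : ℕ => Acount N γ) atTop atTop ∧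
    Tendsto (fun N : ℕ => (Acount N γ : ℝ) / N) atTop (nhds 0) := by
  have hc : (0:ℝ) < 1 - γ := by linarith
  have hratio := tendsto_ratio γ h0 h1
  have hg : Tendsto (fun N : ℕ => (N:ℝ)^γ) atTop atTop :=
    (tendsto_rpow_atTop h0).comp tendsto_natCast_atTop_atTop
  have hγ0 : Tendsto (fun N : ℕ => ((N:ℝ)^γ)⁻¹) atTop (nhds 0) := hg.inv_tendsto_atTop
  -- key identity
  have hid : ∀ N : ℕ, 2 ≤ N →
      ((N:ℝ) / Hgen (N-1) γ) / (N:ℝ)^γ = (N:ℝ)^(1-γ) / Hgen (N-1) γ := by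
    intro N hN
    have pN : (0:ℝ) < (N:ℝ) := by exact_mod_cast (by omega : 0 < N)
    have gpos : (0:ℝ) < (N:ℝ)^γ := Real.rpow_pos_of_pos pN γ
    have Hpos : (0:ℝ) < Hgen (N-1) γ := by
      linarith [hgen_ge_one γ (show 1 ≤ N-1 by omega)]
    have hNN : (N:ℝ) = (N:ℝ)^(1-γ) * (N:ℝ)^γ := by
      rw [← Real.rpow_add pN]; norm_num
    rw [div_div, div_eq_div_iff (by positivity) Hpos.ne']
    nth_rewrite 1 [hNN]
    ring
  have hL1 : Tendsto (fun N : ℕ => (Acount N γ : ℝ) / (N : ℝ) ^ γ) atTop (nhds (1 - γ)) := by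
    have hupp := hratio.add hγ0
    rw [add_zero] at hupp
    apply tendsto_of_tendsto_of_tendsto_of_le_of_le' hratio hupp
    · filter_upwards [eventually_ge_atTop 2] with N hN
      obtain ⟨hlo, _⟩ := acount_bounds γ hN
      have gpos : (0:ℝ) < (N:ℝ)^γ :=
        Real.rpow_pos_of_pos (by exact_mod_cast (by omega : 0 < N)) γ
      have := div_le_div_of_nonneg_right hlo gpos.le
      rwa [hid N hN] at this
    · filter_upwards [eventually_ge_atTop 2] with N hN
      obtain ⟨_, hhi⟩ := acount_bounds γ hN
      have gpos : (0:ℝ) < (N:ℝ)^γ :=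
        Real.rpow_pos_of_pos (by exact_mod_cast (by omega : 0 < N)) γ
      have := div_le_div_of_nonneg_right hhi gpos.le
      rw [add_div, hid N hN, one_div] at this
      exact this
  refine ⟨hL1, ?_, ?_⟩
  · have hReal : Tendsto (fun N : ℕ => ((Acount N γ : ℝ))) atTop atTop := by
      have := hL1.pos_mul_atTop hc hg
      apply this.congr'
      filter_upwards [eventually_ge_atTop 1] with N hN
      have gpos : (0:ℝ) < (N:ℝ)^γ :=
        Real.rpow_pos_of_pos (by exact_mod_cast hN) γ
      rw [div_mul_cancel₀ _ gpos.ne']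
    exact tendsto_natCast_atTop_iff.mp hReal
  · have hpow : Tendsto (fun N : ℕ => (N:ℝ)^(γ-1)) atTop (nhds 0) := by
      have h2 : Tendsto (fun x : ℝ => x^(γ-1)) atTop (nhds 0) := by
        rw [show γ - 1 = -(1-γ) by ring]
        exact tendsto_rpow_neg_atTop hc
      exact h2.comp tendsto_natCast_atTop_atTop
    have := hL1.mul hpow
    rw [mul_zero] at this
    apply this.congr'
    filter_upwards [eventually_ge_atTop 1] with N hN
    have pN : (0:ℝ) < (N:ℝ) := by exact_mod_cast hN
    have gpos : (0:ℝ) < (N:ℝ)^γ := Real.rpow_pos_of_pos pN γ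
    rw [Real.rpow_sub pN, Real.rpow_one, div_mul_div_comm,
      mul_comm ((Acount N γ : ℝ)), mul_div_mul_left _ _ gpos.ne']
end

section
/- Let N ≥ 2 and let D = (d_0, …, d_{N−1}) be a non-increasing sequence of positive integers (d_i ≥ 1 for all i) with d_1 ≥ 2, and let A = #{ i : d_i = 1 }. If D is graphical, then d_0 + d_1 ≤ 2N − 2 − A. -/
/-- For a non-increasing sequence of positive integers on `N ≥ 2` nodes with `d 1 ≥ 2`,
letting `A = #{i : d i = 1}`: if the sequence is graphical (realized as the degree sequence
of a simple graph), then `d 0 + d 1 ≤ 2N - 2 - A`. This is the `k = 1` instance of the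
Erdős–Gallai inequality. -/
theorem two_largest_degrees_bound
    (N : ℕ) (hN : 2 ≤ N) (d : Fin N → ℕ)
    (hmono : Antitone d)
    (hpos : ∀ i, 1 ≤ d i)
    (hd1 : 2 ≤ d ⟨1, by omega⟩)
    (A : ℕ) (hA : A = (Finset.univ.filter (fun i : Fin N => d i = 1)).card)
    (hgraph : ∃ (G : SimpleGraph (Fin N)) (_ : DecidableRel G.Adj),
      ∀ i, G.degree i = d i) :
    (d ⟨0, by omega⟩ : ℤ) + (d ⟨1, by omega⟩ : ℤ) ≤ 2 * (N : ℤ) - 2 - (A : ℤ) := by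
  obtain ⟨G, hdec, hdeg⟩ := hgraph
  set v0 : Fin N := ⟨0, by omega⟩ with hv0
  set v1 : Fin N := ⟨1, by omega⟩ with hv1
  have hne : v0 ≠ v1 := by simp [hv0, hv1, Fin.ext_iff]
  have hdv0 : 2 ≤ d v0 := le_trans hd1 (hmono (by simp [hv0, hv1, Fin.le_def]))
  -- degree as a sum of indicators
  have hdeg_sum : ∀ v : Fin N, d v = ∑ u, if G.Adj v u then 1 else 0 := by
    intro v
    rw [← hdeg v, SimpleGraph.degree, SimpleGraph.neighborFinset_eq_filter,
      Finset.card_filter]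
  -- a degree-one vertex can't be adjacent to both v0 and v1
  have hunit : ∀ u, d u = 1 → G.Adj v0 u → G.Adj v1 u → False := by
    intro u hu h0 h1
    have hsub : ({v0, v1} : Finset (Fin N)) ⊆ G.neighborFinset u := by
      intro x hx
      simp only [Finset.mem_insert, Finset.mem_singleton] at hx
      rcases hx with rfl | rfl
      · exact (SimpleGraph.mem_neighborFinset _ _ _).mpr h0.symm
      · exact (SimpleGraph.mem_neighborFinset _ _ _).mpr h1.symm
    have h2 : 2 ≤ G.degree u := by
      have := Finset.card_le_card hsub
      rwa [Finset.card_pair hne] at this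
    rw [hdeg u, hu] at h2
    omega
  -- the "bad" set
  set P : Fin N → Prop := fun u => u = v0 ∨ u = v1 ∨ d u = 1 with hP
  have hPcard : (Finset.univ.filter (fun u => u = v0 ∨ u = v1 ∨ d u = 1)).card = A + 2 := by
    have : (Finset.univ.filter (fun u => u = v0 ∨ u = v1 ∨ d u = 1))
        = insert v0 (insert v1 (Finset.univ.filter (fun u : Fin N => d u = 1))) := by
      ext x; simp [or_assoc]
    rw [this, Finset.card_insert_of_notMem, Finset.card_insert_of_notMem, hA]
    · simp only [Finset.mem_filter, Finset.mem_univ, true_and]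
      omega
    · simp only [Finset.mem_insert, Finset.mem_filter, Finset.mem_univ, true_and]
      rintro (h | h)
      · exact hne h
      · omega
  -- pointwise bound
  have hpt : ∀ u : Fin N, ((if G.Adj v0 u then 1 else 0) + (if G.Adj v1 u then 1 else 0))
      + (if u = v0 ∨ u = v1 ∨ d u = 1 then 1 else 0) ≤ 2 := by
    intro u
    by_cases h0 : G.Adj v0 u <;> by_cases h1 : G.Adj v1 u <;>
      by_cases hp : u = v0 ∨ u = v1 ∨ d u = 1 <;> simp [h0, h1, hp]
    rcases hp with rfl | rfl | hp
    · exact absurd h0 (G.loopless.irrefl _)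
    · exact absurd h1 (G.loopless.irrefl _)
    · exact hunit u hp h0 h1
  have hsum : d v0 + d v1 + (A + 2) ≤ 2 * N := by
    have := Finset.sum_le_sum (fun u (_ : u ∈ Finset.univ) => hpt u)
    rw [Finset.sum_add_distrib, Finset.sum_add_distrib, ← hdeg_sum v0, ← hdeg_sum v1] at this
    rw [← Finset.card_filter, hPcard, Finset.sum_const, Finset.card_univ,
      Fintype.card_fin, smul_eq_mul, mul_comm] at this
    exact this
  push_cast
  omega
end

section
/- Fix a real γ with 0 < γ < 2. Then there exists N₀ such that for every integer N ≥ N₀, the degree-maximizing sequence S_N = (s_0, …, s_{N−1}) with exponent γ is not graphical; specifically, for all N ≥ N₀ one has s_0 + s_1 > 2N − 2 − A_N, where A_N = #{ i : s_i = 1 }, violating the Erdős–Gallai condition at k = 1. Hence no large network with an unbounded power-law degree distribution with exponent strictly between 0 and 2 can be realized. -/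
set_option maxHeartbeats 1000000


open Filter

/-! ### Auxiliary lemmas -/

lemma tail_nonneg (s m : ℕ) (γ : ℝ) : 0 ≤ ∑ d ∈ Finset.Icc s m, (d:ℝ)^(-γ) :=
  Finset.sum_nonneg fun d _ => Real.rpow_nonneg (Nat.cast_nonneg d) _

lemma Hgen_nonneg_s17 (m : ℕ) (γ : ℝ) : 0 ≤ Hgen m γ := tail_nonneg 1 m γ

lemma one_le_Hgen (m : ℕ) (hm : 1 ≤ m) (γ : ℝ) : 1 ≤ Hgen m γ := by
  have hsub : ({1} : Finset ℕ) ⊆ Finset.Icc 1 m := by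
    intro x hx; simp at hx; subst hx; simp [hm]
  calc (1:ℝ) = ∑ t ∈ ({1} : Finset ℕ), (t:ℝ)^(-γ) := by simp
  _ ≤ Hgen m γ := Finset.sum_le_sum_of_subset_of_nonneg hsub
      (fun i _ _ => Real.rpow_nonneg (Nat.cast_nonneg i) _)

lemma Hgen_mono_exp {m : ℕ} {β γ : ℝ} (hβγ : β ≤ γ) : Hgen m γ ≤ Hgen m β :=
  Finset.sum_le_sum fun t ht =>
    Real.rpow_le_rpow_of_exponent_le (by exact_mod_cast (Finset.mem_Icc.mp ht).1)
      (neg_le_neg hβγ)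

lemma Hgen_le (m : ℕ) {β : ℝ} (hβ0 : 0 < β) (hβ1 : β < 1) (hm : 1 ≤ m) :
    Hgen m β ≤ (1 + 1/(1-β)) * (m:ℝ)^(1-β) := by
  have hanti : AntitoneOn (fun x : ℝ => x^(-β)) (Set.Icc ((1:ℕ):ℝ) ((m:ℕ):ℝ)) := by
    intro a ha b hb hab
    exact Real.rpow_le_rpow_of_nonpos (lt_of_lt_of_le one_pos (by exact_mod_cast ha.1)) hab
      (neg_nonpos.mpr hβ0.le)
  have hsum := AntitoneOn.sum_le_integral_Ico hm hanti
  have hint : (∫ x in ((1:ℕ):ℝ)..((m:ℕ):ℝ), x^(-β)) = ((m:ℝ)^(1-β) - 1)/(1-β) := by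
    rw [integral_rpow (Or.inl (by linarith))]
    push_cast
    rw [Real.one_rpow]
    ring_nf
  have hdecomp : Hgen m β = 1 + ∑ i ∈ Finset.Ico 1 m, ((i+1 : ℕ):ℝ)^(-β) := by
    unfold Hgen
    have h1 : Finset.Icc 1 m = insert 1 ((Finset.Ico 1 m).image (· + 1)) := by
      ext t; simp only [Finset.mem_Icc, Finset.mem_insert, Finset.mem_image, Finset.mem_Ico]
      constructor
      · rintro ⟨h1, h2⟩
        rcases Nat.eq_or_lt_of_le h1 with h | h
        · exact Or.inl h.symm
        · exact Or.inr ⟨t - 1, by omega, by omega⟩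
      · rintro (rfl | ⟨a, ⟨ha1, ha2⟩, rfl⟩) <;> omega
    rw [h1, Finset.sum_insert, Finset.sum_image]
    · push_cast; rw [Real.one_rpow]
    · intro x _ y _ h; simp only at h; omega
    · simp only [Finset.mem_image, Finset.mem_Ico]; omega
  have hone : (1:ℝ) ≤ (m:ℝ)^(1-β) :=
    Real.one_le_rpow (by exact_mod_cast hm) (by linarith)
  rw [hdecomp]
  rw [hint] at hsum
  have h1β : (0:ℝ) < 1 - β := by linarith
  calc 1 + ∑ i ∈ Finset.Ico 1 m, ((i+1 : ℕ):ℝ)^(-β)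
      ≤ 1 + ((m:ℝ)^(1-β) - 1)/(1-β) := by linarith
    _ ≤ (m:ℝ)^(1-β) + (m:ℝ)^(1-β)/(1-β) := by
        gcongr
        linarith
    _ = (1 + 1/(1-β)) * (m:ℝ)^(1-β) := by ring

lemma le_seqS {N i s : ℕ} {γ : ℝ} (h1 : 1 ≤ s) (h2 : s ≤ N - 1)
    (h3 : ((i:ℝ)+1) * Hgen (N-1) γ ≤ (N:ℝ) * ∑ d ∈ Finset.Icc s (N-1), (d:ℝ)^(-γ)) :
    s ≤ seqS N γ i :=
  le_csSup ⟨N-1, fun _ hx => hx.2.1⟩ ⟨h1, h2, h3⟩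

lemma seqS_eq_one {N i : ℕ} {γ : ℝ} (hN : 2 ≤ N) (hi : i < N)
    (h : (N:ℝ) * (Hgen (N-1) γ - 1) < ((i:ℝ)+1) * Hgen (N-1) γ) :
    seqS N γ i = 1 := by
  have hH := Hgen_nonneg_s17 (N-1) γ
  have h1mem : 1 ∈ {s : ℕ | 1 ≤ s ∧ s ≤ N - 1 ∧
      ((i : ℝ) + 1) * Hgen (N - 1) γ ≤ (N : ℝ) * ∑ d ∈ Finset.Icc s (N - 1), (d : ℝ) ^ (-γ)} := by
    refine ⟨le_refl 1, by omega, ?_⟩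
    show ((i:ℝ)+1) * Hgen (N-1) γ ≤ (N:ℝ) * Hgen (N-1) γ
    have hiN : ((i:ℝ)+1) ≤ (N:ℝ) := by exact_mod_cast Nat.succ_le_of_lt hi
    nlinarith
  refine le_antisymm (csSup_le ⟨1, h1mem⟩ ?_) (le_csSup ⟨N-1, fun _ hx => hx.2.1⟩ h1mem)
  rintro s ⟨hs1, hs2, hs3⟩
  by_contra hs
  have hs' : 2 ≤ s := by omega
  have htail : ∑ d ∈ Finset.Icc s (N-1), (d:ℝ)^(-γ) ≤ Hgen (N-1) γ - 1 := by
    have hsub : Finset.Icc s (N-1) ⊆ Finset.Icc 2 (N-1) := Finset.Icc_subset_Icc hs' (le_refl _)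
    have h2 : ∑ d ∈ Finset.Icc 2 (N-1), (d:ℝ)^(-γ) = Hgen (N-1) γ - 1 := by
      have hins : Finset.Icc 1 (N-1) = insert 1 (Finset.Icc 2 (N-1)) := by
        ext t; simp only [Finset.mem_Icc, Finset.mem_insert]; omega
      unfold Hgen
      rw [hins, Finset.sum_insert (by simp)]
      push_cast; rw [Real.one_rpow]; ring
    calc ∑ d ∈ Finset.Icc s (N-1), (d:ℝ)^(-γ)
        ≤ ∑ d ∈ Finset.Icc 2 (N-1), (d:ℝ)^(-γ) := Finset.sum_le_sum_of_subset_of_nonneg hsub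
          (fun d _ _ => Real.rpow_nonneg (Nat.cast_nonneg d) _)
      _ = Hgen (N-1) γ - 1 := h2
  have hN0 : (0:ℝ) ≤ (N:ℝ) := Nat.cast_nonneg N
  nlinarith

lemma tail_ge {N s : ℕ} {γ : ℝ} (hs1 : 1 ≤ s) (hs2 : s ≤ N-1) (hγ : 0 < γ) :
    ((N-1+1-s : ℕ):ℝ) * ((N-1:ℕ):ℝ)^(-γ) ≤ ∑ d ∈ Finset.Icc s (N-1), (d:ℝ)^(-γ) := by
  have hbound : ∀ d ∈ Finset.Icc s (N-1), ((N-1:ℕ):ℝ)^(-γ) ≤ (d:ℝ)^(-γ) := by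
    intro d hd
    have hd' := Finset.mem_Icc.mp hd
    have hdpos : (0:ℝ) < d := by
      have : 1 ≤ d := by omega
      exact_mod_cast this
    exact Real.rpow_le_rpow_of_nonpos hdpos (by exact_mod_cast hd'.2) (neg_nonpos.mpr hγ.le)
  have := Finset.card_nsmul_le_sum (Finset.Icc s (N-1)) (fun d => (d:ℝ)^(-γ)) _ hbound
  rwa [Nat.card_Icc, nsmul_eq_mul] at this

lemma degree_bound {N : ℕ} (G : SimpleGraph (Fin N)) [DecidableRel G.Adj]
    (v w : Fin N) (hvw : v ≠ w) (D : Finset (Fin N))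
    (hD1 : ∀ u ∈ D, G.degree u = 1) (hv : v ∉ D) (hw : w ∉ D) :
    G.degree v + G.degree w + D.card ≤ 2*N - 2 := by
  classical
  set Nv := G.neighborFinset v with hNv
  set Nw := G.neighborFinset w with hNw
  have hdisj : Disjoint (Nv ∩ D) (Nw ∩ D) := by
    rw [Finset.disjoint_left]
    intro u huv huw
    have h1 : G.Adj v u := by
      have := (Finset.mem_inter.mp huv).1
      rwa [hNv, SimpleGraph.mem_neighborFinset] at this
    have h2 : G.Adj w u := by
      have := (Finset.mem_inter.mp huw).1
      rwa [hNw, SimpleGraph.mem_neighborFinset] at this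
    have huD := (Finset.mem_inter.mp huv).2
    have hsub : ({v, w} : Finset (Fin N)) ⊆ G.neighborFinset u := by
      intro x hx
      rcases Finset.mem_insert.mp hx with rfl | hx
      · rw [SimpleGraph.mem_neighborFinset]; exact h1.symm
      · rw [Finset.mem_singleton] at hx; subst hx
        rw [SimpleGraph.mem_neighborFinset]; exact h2.symm
    have hcard2 : ({v, w} : Finset (Fin N)).card = 2 := Finset.card_pair hvw
    have := Finset.card_le_card hsub
    rw [hcard2] at this
    rw [G.card_neighborFinset_eq_degree, hD1 u huD] at this
    omega
  have hinter : (Nv ∩ D).card + (Nw ∩ D).card ≤ D.card := by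
    rw [← Finset.card_union_of_disjoint hdisj]
    exact Finset.card_le_card (Finset.union_subset (Finset.inter_subset_right)
      (Finset.inter_subset_right))
  have hDN : D.card + 1 ≤ N := by
    have : (insert v D).card ≤ N := by
      have := Finset.card_le_card (Finset.subset_univ (insert v D))
      simpa using this
    rwa [Finset.card_insert_of_notMem hv] at this
  have hsv : (Nv \ D).card ≤ N - (D.card + 1) := by
    have hsub : Nv \ D ⊆ Finset.univ \ insert v D := by
      intro u hu
      rw [Finset.mem_sdiff] at hu ⊢
      refine ⟨Finset.mem_univ u, ?_⟩
      intro hmem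
      rcases Finset.mem_insert.mp hmem with rfl | hD
      · exact (G.notMem_neighborFinset_self u) hu.1
      · exact hu.2 hD
    have := Finset.card_le_card hsub
    rwa [Finset.card_sdiff_of_subset (Finset.subset_univ _), Finset.card_univ, Fintype.card_fin,
      Finset.card_insert_of_notMem hv] at this
  have hsw : (Nw \ D).card ≤ N - (D.card + 1) := by
    have hsub : Nw \ D ⊆ Finset.univ \ insert w D := by
      intro u hu
      rw [Finset.mem_sdiff] at hu ⊢
      refine ⟨Finset.mem_univ u, ?_⟩
      intro hmem
      rcases Finset.mem_insert.mp hmem with rfl | hD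
      · exact (G.notMem_neighborFinset_self u) hu.1
      · exact hu.2 hD
    have := Finset.card_le_card hsub
    rwa [Finset.card_sdiff_of_subset (Finset.subset_univ _), Finset.card_univ, Fintype.card_fin,
      Finset.card_insert_of_notMem hw] at this
  have hv' : G.degree v = (Nv \ D).card + (Nv ∩ D).card := by
    rw [← G.card_neighborFinset_eq_degree v, ← hNv, ← Finset.card_sdiff_add_card_inter]
  have hw' : G.degree w = (Nw \ D).card + (Nw ∩ D).card := by
    rw [← G.card_neighborFinset_eq_degree w, ← hNw, ← Finset.card_sdiff_add_card_inter]
  omega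

/-- For `0 < γ < 2`, for all sufficiently large `N` the degree-maximizing sequence `S_N`
violates the Erdős–Gallai condition at `k = 1`, i.e. `s_0 + s_1 > 2N - 2 - A_N`, and
in particular `S_N` is not graphical: no large network with an unbounded power-law degree
distribution with exponent strictly between `0` and `2` can be realized. -/
theorem dense_power_law_not_graphical (γ : ℝ) (h0 : 0 < γ) (h2 : γ < 2) :
    ∃ N₀ : ℕ, ∀ N : ℕ, N₀ ≤ N →
      ((seqS N γ 0 : ℤ) + (seqS N γ 1 : ℤ) > 2 * (N : ℤ) - 2 - (Acount N γ : ℤ)) ∧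
      ¬ ∃ (G : SimpleGraph (Fin N)) (_ : DecidableRel G.Adj),
          ∀ i : Fin N, G.degree i = seqS N γ i.val := by
  classical
  obtain ⟨β, hβpos, hβ1, hβγ, h2β⟩ : ∃ β : ℝ, 0 < β ∧ β < 1 ∧ β ≤ γ ∧ γ < 2*β := by
    refine ⟨min γ ((γ+2)/4), lt_min h0 (by linarith),
      lt_of_le_of_lt (min_le_right _ _) (by linarith), min_le_left _ _, ?_⟩
    rcases min_choice γ ((γ+2)/4) with h | h <;> rw [h] <;> linarith
  have h1β : (0:ℝ) < 1 - β := by linarith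
  obtain ⟨C, hCeq⟩ : ∃ C : ℝ, C = 1 + 1/(1-β) := ⟨_, rfl⟩
  have hC1 : 1 ≤ C := by
    have : 0 < 1/(1-β) := by positivity
    rw [hCeq]; linarith
  have hC0 : (0:ℝ) ≤ C := by linarith
  -- eventual smallness of the error terms
  have hev : ∀ᶠ x : ℝ in atTop, 4*C^2 * x^(γ - 2*β) + 6*C*x^(-β) ≤ 1 := by
    have t1 := tendsto_rpow_neg_atTop (show (0:ℝ) < 2*β - γ by linarith)
    have t2 := tendsto_rpow_neg_atTop hβpos
    have hT : Tendsto (fun x:ℝ => 4*C^2 * x^(γ - 2*β) + 6*C*x^(-β)) atTop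
        (nhds (4*C^2*0 + 6*C*0)) := by
      apply Tendsto.add
      · have he : (fun x:ℝ => 4*C^2 * x^(γ-2*β)) = (fun x:ℝ => 4*C^2 * x^(-(2*β-γ))) := by
          funext x; ring_nf
        rw [he]; exact t1.const_mul _
      · exact t2.const_mul _
    exact hT.eventually (eventually_le_nhds (by norm_num))
  obtain ⟨x₀, hx₀⟩ := eventually_atTop.mp hev
  refine ⟨max 3 ⌈x₀⌉₊, fun N hNN => ?_⟩
  have hN3 : 3 ≤ N := le_trans (le_max_left _ _) hNN
  have hxN : x₀ ≤ (N:ℝ) := by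
    have h1 : (⌈x₀⌉₊ : ℕ) ≤ N := le_trans (le_max_right _ _) hNN
    calc x₀ ≤ (⌈x₀⌉₊ : ℝ) := Nat.le_ceil x₀
    _ ≤ (N:ℝ) := by exact_mod_cast h1
  have hsmall := hx₀ (N:ℝ) hxN
  have hNpos : (0:ℝ) < (N:ℝ) := by
    have : 0 < N := by omega
    exact_mod_cast this
  obtain ⟨H, hHdef⟩ : ∃ H : ℝ, H = Hgen (N-1) γ := ⟨_, rfl⟩
  have hH1 : 1 ≤ H := by rw [hHdef]; exact one_le_Hgen (N-1) (by omega) γ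
  have hHpos : (0:ℝ) < H := lt_of_lt_of_le one_pos hH1
  have hmN : ((N-1:ℕ):ℝ) ≤ (N:ℝ) := by exact_mod_cast Nat.sub_le N 1
  have hm1 : (1:ℝ) ≤ ((N-1:ℕ):ℝ) := by exact_mod_cast (by omega : 1 ≤ N - 1)
  have hmpos : (0:ℝ) < ((N-1:ℕ):ℝ) := lt_of_lt_of_le one_pos hm1
  have hHC : H ≤ C * (N:ℝ)^(1-β) := by
    rw [hHdef, hCeq]
    calc Hgen (N-1) γ ≤ Hgen (N-1) β := Hgen_mono_exp hβγ
    _ ≤ (1 + 1/(1-β)) * ((N-1:ℕ):ℝ)^(1-β) := Hgen_le (N-1) hβpos hβ1 (by omega)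
    _ ≤ (1 + 1/(1-β)) * (N:ℝ)^(1-β) := by
        have : 0 ≤ 1 + 1/(1-β) := by positivity
        exact mul_le_mul_of_nonneg_left (Real.rpow_le_rpow hmpos.le hmN h1β.le) this
  -- the key quantitative inequality
  have key : 4*H^2*((N-1:ℕ):ℝ)^γ + 6*H*(N:ℝ) ≤ (N:ℝ)^2 := by
    have hmγ : ((N-1:ℕ):ℝ)^γ ≤ (N:ℝ)^γ := Real.rpow_le_rpow hmpos.le hmN h0.le
    have hXnn : (0:ℝ) ≤ (N:ℝ)^(1-β) := Real.rpow_nonneg hNpos.le _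
    have hH0 : (0:ℝ) ≤ H := hHpos.le
    have hsq : H^2 ≤ C^2 * ((N:ℝ)^(1-β))^2 := by nlinarith [hHC, hH0, mul_nonneg hC0 hXnn]
    have hN2 : (N:ℝ)^((2:ℕ):ℝ) = (N:ℝ)^2 := Real.rpow_natCast (N:ℝ) 2
    have hsq2 : ((N:ℝ)^(1-β))^2 = (N:ℝ)^(2-2*β) := by
      rw [show (2-2*β) = (1-β)+(1-β) by ring, Real.rpow_add hNpos, sq]
    have e1 : (N:ℝ)^(2-2*β) * (N:ℝ)^γ = (N:ℝ)^2 * (N:ℝ)^(γ-2*β) := by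
      rw [← hN2, ← Real.rpow_add hNpos, ← Real.rpow_add hNpos]
      rw [show (2-2*β)+γ = ((2:ℕ):ℝ)+(γ-2*β) by push_cast; ring]
    have e2 : (N:ℝ)^(1-β) * (N:ℝ) = (N:ℝ)^2 * (N:ℝ)^(-β) := by
      rw [← hN2, ← Real.rpow_add hNpos,
        show ((2:ℕ):ℝ)+(-β) = (1-β)+1 by push_cast; ring,
        Real.rpow_add hNpos, Real.rpow_one]
    have hA1 : 4*H^2*((N-1:ℕ):ℝ)^γ ≤ (N:ℝ)^2 * (4*C^2*(N:ℝ)^(γ-2*β)) := by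
      have hmul : H^2 * ((N-1:ℕ):ℝ)^γ ≤ (C^2 * ((N:ℝ)^(1-β))^2) * (N:ℝ)^γ :=
        mul_le_mul hsq hmγ (Real.rpow_nonneg hmpos.le _)
          (mul_nonneg (by positivity) (by positivity))
      calc 4*H^2*((N-1:ℕ):ℝ)^γ = 4*(H^2 * ((N-1:ℕ):ℝ)^γ) := by ring
      _ ≤ 4*((C^2 * ((N:ℝ)^(1-β))^2) * (N:ℝ)^γ) := by linarith
      _ = 4*C^2 * ((N:ℝ)^(2-2*β) * (N:ℝ)^γ) := by rw [← hsq2]; ring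
      _ = 4*C^2 * ((N:ℝ)^2 * (N:ℝ)^(γ-2*β)) := by rw [e1]
      _ = (N:ℝ)^2 * (4*C^2*(N:ℝ)^(γ-2*β)) := by ring
    have hA2 : 6*H*(N:ℝ) ≤ (N:ℝ)^2 * (6*C*(N:ℝ)^(-β)) := by
      have hmul : H * (N:ℝ) ≤ (C * (N:ℝ)^(1-β)) * (N:ℝ) :=
        mul_le_mul_of_nonneg_right hHC hNpos.le
      calc 6*H*(N:ℝ) = 6*(H*(N:ℝ)) := by ring
      _ ≤ 6*((C * (N:ℝ)^(1-β)) * (N:ℝ)) := by linarith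
      _ = 6*C * ((N:ℝ)^(1-β) * (N:ℝ)) := by ring
      _ = 6*C * ((N:ℝ)^2 * (N:ℝ)^(-β)) := by rw [e2]
      _ = (N:ℝ)^2 * (6*C*(N:ℝ)^(-β)) := by ring
    have hfin : (N:ℝ)^2 * (4*C^2*(N:ℝ)^(γ-2*β) + 6*C*(N:ℝ)^(-β)) ≤ (N:ℝ)^2 * 1 :=
      mul_le_mul_of_nonneg_left hsmall (by positivity)
    nlinarith [hA1, hA2, hfin]
  -- the two ceiling quantities
  obtain ⟨q, hqdef⟩ : ∃ q : ℝ, q = 2*H*((N-1:ℕ):ℝ)^γ / (N:ℝ) := ⟨_, rfl⟩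
  obtain ⟨c, hcdef⟩ : ∃ c : ℕ, c = ⌈q⌉₊ := ⟨_, rfl⟩
  obtain ⟨k, hkdef⟩ : ∃ k : ℕ, k = ⌈(N:ℝ)*(H-1)/H⌉₊ := ⟨_, rfl⟩
  have hq1nn : (0:ℝ) ≤ q := by
    rw [hqdef]
    apply div_nonneg _ hNpos.le
    have := Real.rpow_nonneg hmpos.le γ
    nlinarith
  have hq2nn : (0:ℝ) ≤ (N:ℝ)*(H-1)/H :=
    div_nonneg (mul_nonneg hNpos.le (by linarith)) hHpos.le
  have hcu : (c:ℝ) < q + 1 := by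
    rw [hcdef]; exact Nat.ceil_lt_add_one hq1nn
  have hku : (k:ℝ) < (N:ℝ)*(H-1)/H + 1 := by
    rw [hkdef]; exact Nat.ceil_lt_add_one hq2nn
  have hclow : q ≤ (c:ℝ) := by rw [hcdef]; exact Nat.le_ceil _
  have hklow : (N:ℝ)*(H-1)/H ≤ (k:ℝ) := by rw [hkdef]; exact Nat.le_ceil _
  have hstep : 2*q + 6 ≤ (N:ℝ)/H := by
    rw [hqdef, show 2*(2*H*((N-1:ℕ):ℝ)^γ/(N:ℝ)) + 6
        = (4*H*((N-1:ℕ):ℝ)^γ + 6*(N:ℝ))/(N:ℝ) by field_simp; ring]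
    rw [div_le_div_iff₀ hNpos hHpos]
    linarith [key]
  have hNH : (N:ℝ)*(H-1)/H = (N:ℝ) - (N:ℝ)/H := by
    field_simp
  have hb : 2*c + k + 3 ≤ N := by
    rw [hNH] at hku
    have hreal : ((2*c + k + 3 : ℕ):ℝ) < (N:ℝ) + 1 := by
      push_cast
      linarith
    have : (2*c + k + 3 : ℕ) < N + 1 := by exact_mod_cast hreal
    omega
  have hc3 : c + 3 ≤ N := by omega
  -- lower bounds on the first two entries
  obtain ⟨s, hsdef⟩ : ∃ s : ℕ, s = N - 1 - c := ⟨_, rfl⟩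
  have hs1 : 1 ≤ s := by omega
  have hs2 : s ≤ N - 1 := by omega
  have htail := tail_ge (N := N) (s := s) (γ := γ) hs1 hs2 h0
  have hcard : ((N-1+1-s : ℕ):ℝ) = (c:ℝ) + 1 := by
    have hh : N-1+1-s = c+1 := by omega
    rw [hh]; push_cast; ring
  rw [hcard] at htail
  have hPQ : ((N-1:ℕ):ℝ)^γ * ((N-1:ℕ):ℝ)^(-γ) = 1 := by
    rw [← Real.rpow_add hmpos]
    simp
  have hP0 : (0:ℝ) ≤ ((N-1:ℕ):ℝ)^(-γ) := Real.rpow_nonneg hmpos.le _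
  have hclow' : 2*H*((N-1:ℕ):ℝ)^γ ≤ (c:ℝ)*(N:ℝ) := by
    rw [hqdef, div_le_iff₀ hNpos] at hclow
    linarith
  have h2H : 2*H ≤ (N:ℝ) * ∑ d ∈ Finset.Icc s (N-1), (d:ℝ)^(-γ) := by
    have h1 : 2*H = 2*H*(((N-1:ℕ):ℝ)^γ * ((N-1:ℕ):ℝ)^(-γ)) := by rw [hPQ]; ring
    nlinarith [mul_le_mul_of_nonneg_right hclow' hP0,
      mul_le_mul_of_nonneg_left htail hNpos.le,
      mul_nonneg hNpos.le hP0]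
  have hs0 : s ≤ seqS N γ 0 := by
    apply le_seqS hs1 hs2
    rw [← hHdef]
    push_cast
    linarith
  have hs1' : s ≤ seqS N γ 1 := by
    apply le_seqS hs1 hs2
    rw [← hHdef]
    push_cast
    linarith
  -- entries with index ≥ k are equal to 1
  have hone1 : ∀ i, k ≤ i → i < N → seqS N γ i = 1 := by
    intro i hki hiN
    apply seqS_eq_one (by omega) hiN
    rw [← hHdef]
    have hik : (k:ℝ) ≤ (i:ℝ) := by exact_mod_cast hki
    have hge : (N:ℝ)*(H-1)/H ≤ (i:ℝ) := le_trans hklow hik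
    rw [div_le_iff₀ hHpos] at hge
    nlinarith
  have hA : N - k ≤ Acount N γ := by
    have hsub : ↑(Finset.Ico k N) ⊆ {i : ℕ | i < N ∧ seqS N γ i = 1} := by
      intro i hi
      simp only [Finset.coe_Ico, Set.mem_Ico] at hi
      exact ⟨hi.2, hone1 i hi.1 hi.2⟩
    have hfin : {i : ℕ | i < N ∧ seqS N γ i = 1}.Finite :=
      (Set.finite_Iio N).subset (fun i hi => hi.1)
    calc N - k = (Finset.Ico k N).card := (Nat.card_Ico k N).symm
    _ = (↑(Finset.Ico k N) : Set ℕ).ncard := (Set.ncard_coe_finset _).symm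
    _ ≤ Acount N γ := Set.ncard_le_ncard hsub hfin
  constructor
  · omega
  · rintro ⟨G, hdec, hdeg⟩
    have hvw : (⟨0, by omega⟩ : Fin N) ≠ (⟨1, by omega⟩ : Fin N) :=
      Fin.ne_of_val_ne (show (0:ℕ) ≠ 1 by omega)
    obtain ⟨D, hDdef⟩ : ∃ D : Finset (Fin N),
        D = Finset.univ.filter (fun u : Fin N => 2 ≤ u.val ∧ seqS N γ u.val = 1) := ⟨_, rfl⟩
    have hD1 : ∀ u ∈ D, G.degree u = 1 := by
      intro u hu
      rw [hDdef] at hu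
      rw [hdeg u]
      exact (Finset.mem_filter.mp hu).2.2
    have hv : (⟨0, by omega⟩ : Fin N) ∉ D := by
      intro h
      rw [hDdef] at h
      have h20 : (2:ℕ) ≤ 0 := (Finset.mem_filter.mp h).2.1
      omega
    have hw : (⟨1, by omega⟩ : Fin N) ∉ D := by
      intro h
      rw [hDdef] at h
      have h21 : (2:ℕ) ≤ 1 := (Finset.mem_filter.mp h).2.1
      omega
    have hDA : Acount N γ ≤ D.card + 2 := by
      have hsub : {i : ℕ | i < N ∧ seqS N γ i = 1} ⊆ ↑(D.image Fin.val) ∪ {0, 1} := by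
        intro i hi
        by_cases hi2 : 2 ≤ i
        · left
          simp only [Finset.coe_image, Set.mem_image, Finset.mem_coe]
          exact ⟨⟨i, hi.1⟩, by rw [hDdef]; exact
            Finset.mem_filter.mpr ⟨Finset.mem_univ _, hi2, hi.2⟩, rfl⟩
        · right
          simp only [Set.mem_insert_iff, Set.mem_singleton_iff]
          omega
      have hfin2 : ((↑(D.image Fin.val) ∪ {0, 1} : Set ℕ)).Finite :=
        ((D.image Fin.val).finite_toSet).union (Set.toFinite _)
      calc Acount N γ ≤ (↑(D.image Fin.val) ∪ {0,1} : Set ℕ).ncard :=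
            Set.ncard_le_ncard hsub hfin2
      _ ≤ (↑(D.image Fin.val) : Set ℕ).ncard + ({0,1} : Set ℕ).ncard :=
            Set.ncard_union_le _ _
      _ ≤ D.card + 2 := by
            rw [Set.ncard_coe_finset, Finset.card_image_of_injective _ Fin.val_injective]
            have h01 : ({0,1} : Set ℕ).ncard ≤ 2 :=
              le_trans (Set.ncard_insert_le _ _) (by simp)
            omega
    have hbound := degree_bound G ⟨0, by omega⟩ ⟨1, by omega⟩ hvw D hD1 hv hw
    rw [hdeg ⟨0, by omega⟩, hdeg ⟨1, by omega⟩] at hbound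
    have hbound2 : seqS N γ 0 + seqS N γ 1 + D.card ≤ 2*N - 2 := hbound
    omega
end

section
/- Fix a real γ > 2. Then there exists N₀ such that for every integer N ≥ N₀, the degree-maximizing sequence S_N = (s_0, …, s_{N−1}) with exponent γ satisfies the Erdős–Gallai inequality at k = 1: s_0 + s_1 ≤ 2N − 2 − A_N, where A_N = #{ i : s_i = 1 }. -/
open Filter

lemma tail_inv_sq_le (s m : ℕ) (hs : 1 ≤ s) :
    ∑ d ∈ Finset.Icc s m, ((d : ℝ) ^ 2)⁻¹ ≤ 2 / (s : ℝ) := by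
  have hsub : Finset.Icc s m ⊆ Finset.Ioo (s - 1) (m + 1) := by
    intro d hd
    simp only [Finset.mem_Icc] at hd
    simp only [Finset.mem_Ioo]
    omega
  have h1 : ∑ d ∈ Finset.Icc s m, ((d : ℝ) ^ 2)⁻¹
      ≤ ∑ d ∈ Finset.Ioo (s - 1) (m + 1), ((d : ℝ) ^ 2)⁻¹ := by
    apply Finset.sum_le_sum_of_subset_of_nonneg hsub
    intro i _ _; positivity
  have h2 := sum_Ioo_inv_sq_le (α := ℝ) (s - 1) (m + 1)
  have hcast : ((s - 1 : ℕ) : ℝ) + 1 = (s : ℝ) := by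
    have : s - 1 + 1 = s := by omega
    exact_mod_cast congrArg (Nat.cast (R := ℝ)) this
  calc ∑ d ∈ Finset.Icc s m, ((d : ℝ) ^ 2)⁻¹
      ≤ ∑ d ∈ Finset.Ioo (s - 1) (m + 1), ((d : ℝ) ^ 2)⁻¹ := h1
    _ ≤ 2 / (((s - 1 : ℕ) : ℝ) + 1) := by exact_mod_cast h2
    _ = 2 / (s : ℝ) := by rw [hcast]

lemma tail_rpow_le (γ : ℝ) (hγ : 2 < γ) (s m : ℕ) (hs : 1 ≤ s) :
    ∑ d ∈ Finset.Icc s m, (d : ℝ) ^ (-γ) ≤ 2 * (s : ℝ) ^ (1 - γ) := by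
  have hs0 : (0 : ℝ) < s := by exact_mod_cast hs
  have hstep : ∀ d ∈ Finset.Icc s m, (d : ℝ) ^ (-γ) ≤ (s : ℝ) ^ (2 - γ) * ((d : ℝ) ^ 2)⁻¹ := by
    intro d hd
    simp only [Finset.mem_Icc] at hd
    have hd0 : (0 : ℝ) < d := by
      have : 1 ≤ d := le_trans hs hd.1
      exact_mod_cast this
    have hds : (s : ℝ) ≤ (d : ℝ) := by exact_mod_cast hd.1
    have h1 : (d : ℝ) ^ (2 - γ) ≤ (s : ℝ) ^ (2 - γ) :=
      Real.rpow_le_rpow_of_nonpos hs0 hds (by linarith)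
    have h2 : (d : ℝ) ^ (-γ) = (d : ℝ) ^ (2 - γ) * ((d : ℝ) ^ 2)⁻¹ := by
      rw [← Real.rpow_two, ← Real.rpow_neg hd0.le, ← Real.rpow_add hd0]
      ring_nf
    rw [h2]
    exact mul_le_mul_of_nonneg_right h1 (by positivity)
  calc ∑ d ∈ Finset.Icc s m, (d : ℝ) ^ (-γ)
      ≤ ∑ d ∈ Finset.Icc s m, (s : ℝ) ^ (2 - γ) * ((d : ℝ) ^ 2)⁻¹ :=
        Finset.sum_le_sum hstep
    _ = (s : ℝ) ^ (2 - γ) * ∑ d ∈ Finset.Icc s m, ((d : ℝ) ^ 2)⁻¹ := by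
        rw [Finset.mul_sum]
    _ ≤ (s : ℝ) ^ (2 - γ) * (2 / (s : ℝ)) := by
        apply mul_le_mul_of_nonneg_left (tail_inv_sq_le s m hs) (by positivity)
    _ = 2 * ((s : ℝ) ^ (2 - γ) * (s : ℝ) ^ (-1 : ℝ)) := by
        rw [Real.rpow_neg_one]; ring
    _ = 2 * (s : ℝ) ^ (1 - γ) := by
        rw [← Real.rpow_add hs0]; ring_nf

lemma seqS_le (γ : ℝ) (hγ : 2 < γ) (N i : ℕ) :
    (seqS N γ i : ℝ) ≤ (2 * (N : ℝ)) ^ (γ - 1)⁻¹ := by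
  set S := {s : ℕ | 1 ≤ s ∧ s ≤ N - 1 ∧
    ((i : ℝ) + 1) * Hgen (N - 1) γ ≤ (N : ℝ) * ∑ d ∈ Finset.Icc s (N - 1), (d : ℝ) ^ (-γ)}
    with hS
  by_cases hne : S.Nonempty
  · have hbdd : BddAbove S := ⟨N - 1, fun s hs => hs.2.1⟩
    have hmem : sSup S ∈ S := Nat.sSup_mem hne hbdd
    obtain ⟨h1, h2, h3⟩ := hmem
    set s := sSup S
    have hs0 : (0 : ℝ) < s := by exact_mod_cast h1
    have hN2 : 2 ≤ N := by omega
    have hN0 : (0 : ℝ) < N := by positivity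
    -- H ≥ 1
    have hHterms : ∀ t ∈ Finset.Icc 1 (N - 1), (0 : ℝ) ≤ (t : ℝ) ^ (-γ) := by
      intro t _; positivity
    have hH1 : (1 : ℝ) ≤ Hgen (N - 1) γ := by
      have h1mem : 1 ∈ Finset.Icc 1 (N - 1) := by
        simp only [Finset.mem_Icc]; omega
      have := Finset.single_le_sum hHterms h1mem
      simpa [Hgen] using this
    have hi1 : (1 : ℝ) ≤ (i : ℝ) + 1 := by
      have : (0 : ℝ) ≤ (i : ℝ) := Nat.cast_nonneg i
      linarith
    have hge1 : (1 : ℝ) ≤ ((i : ℝ) + 1) * Hgen (N - 1) γ := by nlinarith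
    have htail := tail_rpow_le γ hγ s (N - 1) h1
    have hkey : (1 : ℝ) ≤ (N : ℝ) * (2 * (s : ℝ) ^ (1 - γ)) := by
      have : (N : ℝ) * ∑ d ∈ Finset.Icc s (N - 1), (d : ℝ) ^ (-γ)
          ≤ (N : ℝ) * (2 * (s : ℝ) ^ (1 - γ)) :=
        mul_le_mul_of_nonneg_left htail hN0.le
      linarith
    -- s ^ (γ - 1) ≤ 2 N
    have hexp : (s : ℝ) ^ (γ - 1) ≤ 2 * (N : ℝ) := by
      have hmul := mul_le_mul_of_nonneg_right hkey
        (le_of_lt (Real.rpow_pos_of_pos hs0 (γ - 1)))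
      have hcancel : (s : ℝ) ^ (1 - γ) * (s : ℝ) ^ (γ - 1) = 1 := by
        rw [← Real.rpow_add hs0]; norm_num
      calc (s : ℝ) ^ (γ - 1) = 1 * (s : ℝ) ^ (γ - 1) := by ring
        _ ≤ (N : ℝ) * (2 * (s : ℝ) ^ (1 - γ)) * (s : ℝ) ^ (γ - 1) := hmul
        _ = 2 * (N : ℝ) * ((s : ℝ) ^ (1 - γ) * (s : ℝ) ^ (γ - 1)) := by ring
        _ = 2 * (N : ℝ) := by rw [hcancel]; ring
    have hγ1 : (0 : ℝ) < γ - 1 := by linarith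
    have := Real.rpow_le_rpow (by positivity) hexp (le_of_lt (inv_pos.mpr hγ1))
    calc (s : ℝ) = ((s : ℝ) ^ (γ - 1)) ^ (γ - 1)⁻¹ := by
          rw [← Real.rpow_mul hs0.le, mul_inv_cancel₀ (ne_of_gt hγ1), Real.rpow_one]
      _ ≤ (2 * (N : ℝ)) ^ (γ - 1)⁻¹ := this
  · have : S = ∅ := Set.not_nonempty_iff_eq_empty.mp hne
    rw [seqS, ← hS, this, csSup_empty]
    simp only [Nat.bot_eq_zero, Nat.cast_zero]
    positivity

lemma Acount_le (N : ℕ) (γ : ℝ) : Acount N γ ≤ N := by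
  have hsub : {i : ℕ | i < N ∧ seqS N γ i = 1} ⊆ ↑(Finset.range N) := by
    intro i hi
    simp only [Finset.coe_range, Set.mem_Iio]
    exact hi.1
  calc Acount N γ ≤ (↑(Finset.range N) : Set ℕ).ncard :=
        Set.ncard_le_ncard hsub (Finset.range N).finite_toSet
    _ = N := by rw [Set.ncard_coe_finset, Finset.card_range]

/-- For `γ > 2`, for all sufficiently large `N` the degree-maximizing sequence `S_N`
satisfies the Erdős–Gallai inequality at `k = 1`: `s_0 + s_1 ≤ 2N - 2 - A_N`. -/
theorem sparse_power_law_EG_at_one (γ : ℝ) (hγ : 2 < γ) :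
    ∃ N₀ : ℕ, ∀ N : ℕ, N₀ ≤ N →
      (seqS N γ 0 : ℤ) + (seqS N γ 1 : ℤ) ≤ 2 * (N : ℤ) - 2 - (Acount N γ : ℤ) := by
  set c : ℝ := (γ - 1)⁻¹ with hc
  have hγ1 : (1 : ℝ) < γ - 1 := by linarith
  have hc0 : 0 < c := inv_pos.mpr (by linarith)
  have hc1 : c < 1 := by
    rw [hc, inv_lt_one_iff₀]; right; exact hγ1
  have h0 : Tendsto (fun x : ℝ => x ^ (c - 1)) atTop (nhds 0) := by
    have := tendsto_rpow_neg_atTop (y := 1 - c) (by linarith)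
    simpa [neg_sub] using this
  have hev : ∀ᶠ x : ℝ in atTop, x ^ (c - 1) < 1 / 8 :=
    h0.eventually (gt_mem_nhds (by norm_num : (0:ℝ) < 1/8))
  have hev2 : ∀ᶠ x : ℝ in atTop, (4 : ℝ) ≤ x := eventually_ge_atTop 4
  have hevN : ∀ᶠ N : ℕ in atTop,
      ((N : ℝ) ^ (c - 1) < 1 / 8 ∧ (4 : ℝ) ≤ (N : ℝ)) :=
    tendsto_natCast_atTop_atTop.eventually (hev.and hev2)
  rw [eventually_atTop] at hevN
  obtain ⟨N₀, hN₀⟩ := hevN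
  refine ⟨N₀, fun N hN => ?_⟩
  obtain ⟨hxc, hx4⟩ := hN₀ N hN
  set x : ℝ := (N : ℝ)
  have hx0 : (0 : ℝ) < x := by linarith
  have hbound : ∀ i : ℕ, (seqS N γ i : ℝ) ≤ 2 * ((1 / 8) * x) := by
    intro i
    have h1 := seqS_le γ hγ N i
    have h2 : (2 * x) ^ c = 2 ^ c * x ^ c := Real.mul_rpow (by norm_num) hx0.le
    have h3 : (2 : ℝ) ^ c ≤ 2 := by
      calc (2 : ℝ) ^ c ≤ 2 ^ (1 : ℝ) :=
            Real.rpow_le_rpow_of_exponent_le one_le_two hc1.le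
        _ = 2 := Real.rpow_one 2
    have h4 : x ^ c = x ^ (c - 1) * x := by
      rw [← Real.rpow_add_one hx0.ne' (c - 1)]
      norm_num
    have h5 : x ^ c ≤ (1 / 8) * x := by
      rw [h4]
      exact mul_le_mul_of_nonneg_right hxc.le hx0.le
    have h6 : (2 * x) ^ c ≤ 2 * ((1 / 8) * x) := by
      rw [h2]
      have hxc0 : 0 ≤ x ^ c := Real.rpow_nonneg hx0.le c
      nlinarith
    exact le_trans h1 h6
  have hs0 := hbound 0
  have hs1 := hbound 1
  have hsum : (seqS N γ 0 : ℝ) + (seqS N γ 1 : ℝ) ≤ x - 2 := by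
    have : 2 * (2 * ((1 / 8) * x)) ≤ x - 2 := by linarith
    linarith
  have hsumZ : (seqS N γ 0 : ℤ) + (seqS N γ 1 : ℤ) ≤ (N : ℤ) - 2 := by
    have h : (((seqS N γ 0 : ℤ) + (seqS N γ 1 : ℤ) : ℤ) : ℝ) ≤ (((N : ℤ) - 2 : ℤ) : ℝ) := by
      push_cast
      linarith
    exact_mod_cast h
  have hA : (Acount N γ : ℤ) ≤ (N : ℤ) := by exact_mod_cast Acount_le N γ
  linarith
end

section
/- Fix a real γ with 0 < γ < 2, and let f : ℕ → ℕ be a cutoff function satisfying f(N) ≤ N−1 for all N, f(N) → ∞, and f(N)/N → 0 as N → ∞. For integer N ≥ 2 define the cutoff degree-maximizing sequence S_N = (s_0, …, s_{N−1}) by s_i = max{ s ∈ {1, …, f(N)} : N · Σ_{d=s}^{f(N)} d^{−γ} ≥ (i+1) · H_{f(N),γ} }. Then there exists N₀ such that for all N ≥ N₀, s_0 + s_1 ≤ 2N − 2 − A_N, where A_N = #{ i : s_i = 1 }; i.e., imposing a sublinear cutoff on the power-law distribution restores the Erdős–Gallai inequality at k = 1, and the graphicality obstruction disappears. -/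
open Filter

/-- The cutoff degree-maximizing sequence with exponent `γ`, cutoff `f N`, on `N` nodes:
`s_i = max { s ∈ {1,…,f N} : N · ∑_{d=s}^{f N} d^{-γ} ≥ (i+1) · H_{f N,γ} }`. -/
noncomputable def seqSc (f : ℕ → ℕ) (N : ℕ) (γ : ℝ) (i : ℕ) : ℕ :=
  sSup {s : ℕ | 1 ≤ s ∧ s ≤ f N ∧
    ((i : ℝ) + 1) * Hgen (f N) γ ≤ (N : ℝ) * ∑ d ∈ Finset.Icc s (f N), (d : ℝ) ^ (-γ)}

/-- The number of entries `s_i` (for `i ∈ {0,…,N-1}`) of the cutoff degree-maximizing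
sequence that are equal to `1`. -/
noncomputable def AcountC (f : ℕ → ℕ) (N : ℕ) (γ : ℝ) : ℕ :=
  {i : ℕ | i < N ∧ seqSc f N γ i = 1}.ncard

/-- For `0 < γ < 2` and a cutoff function `f` with `f N ≤ N - 1`, `f N → ∞` and
`f N / N → 0`: for all sufficiently large `N`, the cutoff degree-maximizing sequence
satisfies the Erdős–Gallai inequality at `k = 1`, `s_0 + s_1 ≤ 2N - 2 - A_N`; a sublinear
cutoff removes the graphicality obstruction. -/
theorem cutoff_restores_EG_at_one (γ : ℝ) (h0 : 0 < γ) (h2 : γ < 2)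
    (f : ℕ → ℕ)
    (hf1 : ∀ N : ℕ, f N ≤ N - 1)
    (hf2 : Tendsto f atTop atTop)
    (hf3 : Tendsto (fun N : ℕ => (f N : ℝ) / N) atTop (nhds 0)) :
    ∃ N₀ : ℕ, ∀ N : ℕ, N₀ ≤ N →
      (seqSc f N γ 0 : ℤ) + (seqSc f N γ 1 : ℤ) ≤ 2 * (N : ℤ) - 2 - (AcountC f N γ : ℤ) := by
  have hle : ∀ N i, seqSc f N γ i ≤ f N := by
    intro N i
    apply csSup_le'
    rintro s ⟨-, h, -⟩
    exact h
  have h14 : ∀ᶠ N : ℕ in atTop, (f N : ℝ) / N < 1/4 :=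
    hf3.eventually_lt_const (by norm_num)
  rw [eventually_atTop] at h14
  obtain ⟨M, hM⟩ := h14
  refine ⟨max M 8, fun N hN => ?_⟩
  have hN8 : 8 ≤ N := le_trans (le_max_right _ _) hN
  have hNpos : (0:ℝ) < N := by positivity
  have h4 : 4 * f N < N := by
    have := hM N (le_trans (le_max_left _ _) hN)
    have : (4 : ℝ) * f N < N := by
      rw [div_lt_iff₀ hNpos] at this
      linarith
    exact_mod_cast this
  have hA : AcountC f N γ ≤ N := by
    have hsub : {i : ℕ | i < N ∧ seqSc f N γ i = 1} ⊆ ↑(Finset.Iio N) := by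
      intro i hi; simpa using hi.1
    calc AcountC f N γ ≤ (↑(Finset.Iio N) : Set ℕ).ncard :=
          Set.ncard_le_ncard hsub (Finset.Iio N).finite_toSet
      _ = N := by rw [Set.ncard_coe_finset, Nat.card_Iio]
  have h0' := hle N 0
  have h1' := hle N 1
  omega
end
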